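/- arXiv:2101.09216 — 8 statements merged into one kernel-verified Lean document; each statement's English description precedes it below -/
import Mathlib

section
/- For every z ∈ ℂ^g, the family (exp(iπ(nᵗτn + 2nᵗz)))_{n ∈ ℤ^g} is summable (the theta series converges absolutely), and the resulting Riemann theta function θ : ℂ^g → ℂ, θ(z) = Σ_{n ∈ ℤ^g} exp(iπ(nᵗτn + 2nᵗz)), is analytic (entire) on ℂ^g. -/
open Complex BigOperators

/-- The general term of the Riemann theta series:
`exp(iπ(nᵗτn + 2nᵗz))` for `n ∈ ℤ^g`. -/
noncomputable def thetaTerm {g : ℕ} (τ : Matrix (Fin g) (Fin g) ℂ)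
    (z : Fin g → ℂ) (n : Fin g → ℤ) : ℂ :=
  Complex.exp ((Real.pi : ℂ) * Complex.I *
    ((∑ i, ∑ j, (n i : ℂ) * τ i j * (n j : ℂ)) + 2 * ∑ i, (n i : ℂ) * z i))

/-- The Riemann theta function `θ(z) = Σ_{n ∈ ℤ^g} exp(iπ(nᵗτn + 2nᵗz))`. -/
noncomputable def riemannTheta {g : ℕ} (τ : Matrix (Fin g) (Fin g) ℂ)
    (z : Fin g → ℂ) : ℂ :=
  ∑' n : Fin g → ℤ, thetaTerm τ z n

/-! ### Auxiliary definitions and lemmas -/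

namespace RiemannThetaAux

open Finset

/-- `Σ_i |n_i|`. -/
def Nsum {g : ℕ} (n : Fin g → ℤ) : ℝ := ∑ i, |(n i : ℝ)|

/-- `Σ_i n_i²`. -/
def Qsum {g : ℕ} (n : Fin g → ℤ) : ℝ := ∑ i, (n i : ℝ) ^ 2

lemma Nsum_nonneg {g : ℕ} (n : Fin g → ℤ) : 0 ≤ Nsum n :=
  Finset.sum_nonneg fun _ _ => abs_nonneg _

/-- The gaussian-type bound for the theta series. -/
noncomputable def bound {g : ℕ} (c S : ℝ) (n : Fin g → ℤ) : ℝ :=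
  Real.exp (-Real.pi * (c * Qsum n - 2 * S * Nsum n))

lemma bound_nonneg {g : ℕ} (c S : ℝ) (n : Fin g → ℤ) : 0 ≤ bound c S n :=
  Real.exp_nonneg _

lemma summable_bound_int (c S : ℝ) (hc : 0 < c) :
    Summable fun k : ℤ => Real.exp (-Real.pi * (c * (k : ℝ) ^ 2 - 2 * S * |(k : ℝ)|)) := by
  have := summable_pow_mul_jacobiTheta₂_term_bound S hc 0
  simpa using this

lemma summable_bound : ∀ (g : ℕ) (c S : ℝ), 0 < c →
    Summable fun n : Fin g → ℤ => bound c S n := by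
  intro g
  induction g with
  | zero =>
    intro c S _
    exact Summable.of_finite
  | succ g ih =>
    intro c S hc
    have he := (Fin.consEquiv (fun _ : Fin (g + 1) => ℤ)).summable_iff
      (f := fun n : Fin (g + 1) → ℤ => bound c S n)
    rw [← he]
    have hprod : Summable fun p : ℤ × (Fin g → ℤ) =>
        (Real.exp (-Real.pi * (c * (p.1 : ℝ) ^ 2 - 2 * S * |(p.1 : ℝ)|))) * bound c S p.2 :=
      Summable.mul_of_nonneg (summable_bound_int c S hc) (ih c S hc)
        (fun _ => Real.exp_nonneg _) (fun _ => Real.exp_nonneg _)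
    apply hprod.congr
    rintro ⟨k, m⟩
    simp only [Fin.consEquiv, Equiv.coe_fn_mk, bound, Qsum, Nsum, ← Real.exp_add,
      Function.comp_apply]
    congr 1
    rw [Fin.sum_univ_succ, Fin.sum_univ_succ]
    simp only [Fin.cons_zero, Fin.cons_succ]
    ring

/-- Coercivity of a positive definite real matrix. -/
lemma posdef_coercive {g : ℕ} {A : Matrix (Fin g) (Fin g) ℝ} (hA : A.PosDef) :
    ∃ c > 0, ∀ x : Fin g → ℝ, c * ∑ i, x i ^ 2 ≤ ∑ i, ∑ j, x i * A i j * x j := by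
  have hquad : ∀ x : Fin g → ℝ, x ≠ 0 → 0 < ∑ i, ∑ j, x i * A i j * x j := by
    intro x hx
    have := hA.dotProduct_mulVec_pos hx
    rw [star_trivial] at this
    calc (0 : ℝ) < dotProduct x (A.mulVec x) := this
      _ = ∑ i, ∑ j, x i * A i j * x j := by
          simp only [dotProduct, Matrix.mulVec, Finset.mul_sum]
          exact Finset.sum_congr rfl fun i _ => Finset.sum_congr rfl fun j _ => by ring
  rcases Nat.eq_zero_or_pos g with hg | hg
  · refine ⟨1, one_pos, fun x => ?_⟩
    subst hg
    simp
  · -- work in Euclidean space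
    set E := EuclideanSpace ℝ (Fin g)
    haveI : Nontrivial E := by
      refine ⟨EuclideanSpace.single ⟨0, hg⟩ 1, 0, fun h => ?_⟩
      have h1 : ‖EuclideanSpace.single (⟨0, hg⟩ : Fin g) (1 : ℝ)‖ = 1 := by
        rw [EuclideanSpace.norm_single]; norm_num
      rw [h, norm_zero] at h1
      norm_num at h1
    set f : E → ℝ := fun x => ∑ i, ∑ j, x i * A i j * x j with hf
    have hcont : Continuous f := by
      apply continuous_finset_sum
      intro i _
      apply continuous_finset_sum
      intro j _
      exact (((EuclideanSpace.proj i).continuous).mul continuous_const).mul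
        (EuclideanSpace.proj j).continuous
    have hsph : (Metric.sphere (0 : E) 1).Nonempty :=
      NormedSpace.sphere_nonempty.mpr zero_le_one
    obtain ⟨x₀, hx₀, hmin⟩ :=
      (isCompact_sphere (0 : E) 1).exists_isMinOn hsph hcont.continuousOn
    have hx₀norm : ‖x₀‖ = 1 := by simpa using hx₀
    have hx₀ne : x₀ ≠ 0 := by
      intro h; rw [h] at hx₀norm; simp at hx₀norm
    have hcpos : 0 < f x₀ := hquad x₀ (by
      intro h
      exact hx₀ne (by ext i; exact congrFun h i))
    refine ⟨f x₀, hcpos, fun x => ?_⟩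
    by_cases hx : x = 0
    · subst hx; simp
    · set X : E := WithLp.toLp 2 x with hX
      have hXne : X ≠ 0 := by
        intro h
        exact hx (by ext i; exact congrArg (fun v : E => v i) h)
      have hr : 0 < ‖X‖ := norm_pos_iff.mpr hXne
      set y : E := ‖X‖⁻¹ • X with hy
      have hynorm : y ∈ Metric.sphere (0 : E) 1 := by
        simp [hy, norm_smul, abs_of_pos (inv_pos.mpr hr), inv_mul_cancel₀ hr.ne']
      have hfy : f x₀ ≤ f y := hmin hynorm
      have hhom : f y = ‖X‖⁻¹ ^ 2 * f X := by
        simp only [hf, hy]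
        rw [Finset.mul_sum]
        refine Finset.sum_congr rfl fun i _ => ?_
        rw [Finset.mul_sum]
        refine Finset.sum_congr rfl fun j _ => ?_
        have hi : (‖X‖⁻¹ • X) i = ‖X‖⁻¹ * X i := rfl
        have hj : (‖X‖⁻¹ • X) j = ‖X‖⁻¹ * X j := rfl
        rw [hi, hj]; ring
      have hnorm_sq : ‖X‖ ^ 2 = ∑ i, x i ^ 2 := by
        rw [EuclideanSpace.norm_eq]
        rw [Real.sq_sqrt (by positivity)]
        exact Finset.sum_congr rfl fun i _ => by
          rw [Real.norm_eq_abs, _root_.sq_abs]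
      have : f x₀ * ‖X‖ ^ 2 ≤ f X := by
        have h1 : f x₀ * ‖X‖ ^ 2 ≤ f y * ‖X‖ ^ 2 :=
          mul_le_mul_of_nonneg_right hfy (by positivity)
        have h2 : f y * ‖X‖ ^ 2 = f X := by
          rw [hhom]
          field_simp
        linarith
      calc f x₀ * ∑ i, x i ^ 2 = f x₀ * ‖X‖ ^ 2 := by rw [hnorm_sq]
        _ ≤ f X := this
        _ = ∑ i, ∑ j, x i * A i j * x j := rfl

/-- The norm of a theta term. -/
lemma norm_thetaTerm {g : ℕ} (τ : Matrix (Fin g) (Fin g) ℂ) (z : Fin g → ℂ)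
    (n : Fin g → ℤ) :
    ‖thetaTerm τ z n‖ =
      Real.exp (-Real.pi * ((∑ i, ∑ j, (n i : ℝ) * (τ i j).im * (n j : ℝ)) +
        2 * ∑ i, (n i : ℝ) * (z i).im)) := by
  rw [thetaTerm, Complex.norm_exp]
  congr 1
  have hQ : (∑ i, ∑ j, (n i : ℂ) * τ i j * (n j : ℂ)).im
      = ∑ i, ∑ j, (n i : ℝ) * (τ i j).im * (n j : ℝ) := by
    rw [Complex.im_sum]
    refine Finset.sum_congr rfl fun i _ => ?_
    rw [Complex.im_sum]
    refine Finset.sum_congr rfl fun j _ => ?_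
    simp [Complex.mul_im, Complex.mul_re]
    try ring
  have hL : (∑ i, (n i : ℂ) * z i).im = ∑ i, (n i : ℝ) * (z i).im := by
    rw [Complex.im_sum]
    refine Finset.sum_congr rfl fun i _ => ?_
    simp [Complex.mul_im]
  set w : ℂ := (∑ i, ∑ j, (n i : ℂ) * τ i j * (n j : ℂ)) + 2 * ∑ i, (n i : ℂ) * z i with hw
  have hwim : w.im = (∑ i, ∑ j, (n i : ℝ) * (τ i j).im * (n j : ℝ)) +
      2 * ∑ i, (n i : ℝ) * (z i).im := by
    rw [hw, Complex.add_im, hQ]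
    congr 1
    simp [Complex.mul_im, hL]
  have hre : ((Real.pi : ℂ) * Complex.I * w).re = -Real.pi * w.im := by
    simp [Complex.mul_re, Complex.mul_im]
  rw [hre, hwim]

/-- The linear form `z ↦ 2πi Σ n_i z_i` as a continuous linear map. -/
noncomputable def thetaLin {g : ℕ} (n : Fin g → ℤ) : (Fin g → ℂ) →L[ℂ] ℂ :=
  ∑ i, (2 * (Real.pi : ℂ) * Complex.I * (n i : ℂ)) • ContinuousLinearMap.proj i

lemma thetaLin_apply {g : ℕ} (n : Fin g → ℤ) (z : Fin g → ℂ) :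
    thetaLin n z = ∑ i, 2 * (Real.pi : ℂ) * Complex.I * (n i : ℂ) * z i := by
  simp [thetaLin, ContinuousLinearMap.sum_apply, smul_eq_mul]

lemma norm_thetaLin_le {g : ℕ} (n : Fin g → ℤ) :
    ‖thetaLin n‖ ≤ 2 * Real.pi * Nsum n := by
  have hnonneg : (0:ℝ) ≤ 2 * Real.pi * Nsum n := by
    have := Nsum_nonneg n
    positivity
  refine ContinuousLinearMap.opNorm_le_bound _ hnonneg fun z => ?_
  rw [thetaLin_apply]
  calc ‖∑ i, 2 * (Real.pi : ℂ) * Complex.I * (n i : ℂ) * z i‖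
      ≤ ∑ i, ‖2 * (Real.pi : ℂ) * Complex.I * (n i : ℂ) * z i‖ := norm_sum_le _ _
    _ ≤ ∑ i, 2 * Real.pi * |(n i : ℝ)| * ‖z‖ := by
        refine Finset.sum_le_sum fun i _ => ?_
        have h1 : ‖(2 * (Real.pi : ℂ) * Complex.I * (n i : ℂ))‖ = 2 * Real.pi * |(n i : ℝ)| := by
          rw [show ((n i : ℂ)) = ((n i : ℝ) : ℂ) by push_cast; ring]
          simp only [norm_mul, Complex.norm_I, mul_one, Complex.norm_real, Real.norm_eq_abs]
          rw [abs_of_pos Real.pi_pos]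
          norm_num
        calc ‖2 * (Real.pi : ℂ) * Complex.I * (n i : ℂ) * z i‖
            = ‖(2 * (Real.pi : ℂ) * Complex.I * (n i : ℂ))‖ * ‖z i‖ := norm_mul _ _
          _ = 2 * Real.pi * |(n i : ℝ)| * ‖z i‖ := by rw [h1]
          _ ≤ 2 * Real.pi * |(n i : ℝ)| * ‖z‖ := by
              refine mul_le_mul_of_nonneg_left (norm_le_pi_norm z i) ?_
              positivity
    _ = 2 * Real.pi * Nsum n * ‖z‖ := by
        simp only [Nsum, Finset.sum_mul, Finset.mul_sum]

lemma norm_thetaLin_apply_le {g : ℕ} (n : Fin g → ℤ) (y : Fin g → ℂ) (hy : ‖y‖ ≤ 1) :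
    ‖thetaLin n y‖ ≤ 2 * Real.pi * Nsum n := by
  calc ‖thetaLin n y‖ ≤ ‖thetaLin n‖ * ‖y‖ := (thetaLin n).le_opNorm y
    _ ≤ (2 * Real.pi * Nsum n) * 1 :=
        mul_le_mul (norm_thetaLin_le n) hy (norm_nonneg _)
          (by have := Nsum_nonneg n; positivity)
    _ = 2 * Real.pi * Nsum n := mul_one _

lemma thetaTerm_add {g : ℕ} (τ : Matrix (Fin g) (Fin g) ℂ) (x y : Fin g → ℂ)
    (n : Fin g → ℤ) :
    thetaTerm τ (x + y) n = thetaTerm τ x n * Complex.exp (thetaLin n y) := by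
  rw [thetaTerm, thetaTerm, ← Complex.exp_add]
  congr 1
  rw [thetaLin_apply]
  have h1 : ∑ i, (n i : ℂ) * (x + y) i = (∑ i, (n i : ℂ) * x i) + ∑ i, (n i : ℂ) * y i := by
    rw [← Finset.sum_add_distrib]
    exact Finset.sum_congr rfl fun i _ => by simp [Pi.add_apply]; try ring
  rw [h1]
  rw [show ∑ i, 2 * (Real.pi : ℂ) * Complex.I * (n i : ℂ) * y i
      = 2 * (Real.pi : ℂ) * Complex.I * ∑ i, (n i : ℂ) * y i by
    rw [Finset.mul_sum]; exact Finset.sum_congr rfl fun i _ => by ring]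
  ring

lemma norm_thetaTerm_le {g : ℕ} {τ : Matrix (Fin g) (Fin g) ℂ} {c : ℝ}
    (hc : ∀ x : Fin g → ℝ, c * ∑ i, x i ^ 2 ≤ ∑ i, ∑ j, x i * (τ i j).im * x j)
    (z : Fin g → ℂ) {S : ℝ} (hS : ∀ i, |(z i).im| ≤ S) (n : Fin g → ℤ) :
    ‖thetaTerm τ z n‖ ≤ bound c S n := by
  rw [norm_thetaTerm, bound, Real.exp_le_exp]
  have h1 : c * Qsum n ≤ ∑ i, ∑ j, (n i : ℝ) * (τ i j).im * (n j : ℝ) :=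
    hc fun i => (n i : ℝ)
  have h2 : -(S * Nsum n) ≤ ∑ i, (n i : ℝ) * (z i).im := by
    rw [Nsum, Finset.mul_sum, ← Finset.sum_neg_distrib]
    refine Finset.sum_le_sum fun i _ => ?_
    have habs : |(n i : ℝ) * (z i).im| ≤ |(n i : ℝ)| * S := by
      rw [abs_mul]
      exact mul_le_mul_of_nonneg_left (hS i) (abs_nonneg _)
    have hneg := neg_abs_le ((n i : ℝ) * (z i).im)
    have : S * |(n i : ℝ)| = |(n i : ℝ)| * S := mul_comm _ _
    linarith
  rw [neg_mul, neg_mul, neg_le_neg_iff]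
  apply mul_le_mul_of_nonneg_left _ Real.pi_pos.le
  linarith

lemma abs_im_le_pi_norm {g : ℕ} (z : Fin g → ℂ) (i : Fin g) : |(z i).im| ≤ ‖z‖ :=
  (Complex.abs_im_le_norm (z i)).trans (by
    exact norm_le_pi_norm z i)

lemma pow_div_factorial_le_exp (x : ℝ) (hx : 0 ≤ x) (k : ℕ) :
    x ^ k / (Nat.factorial k : ℝ) ≤ Real.exp x := by
  calc x ^ k / (Nat.factorial k : ℝ) ≤ ∑ i ∈ Finset.range (k + 1), x ^ i / (Nat.factorial i : ℝ) := by
        refine Finset.single_le_sum (f := fun i => x ^ i / (Nat.factorial i : ℝ)) ?_ ?_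
        · intro i _; positivity
        · simp
    _ ≤ Real.exp x := Real.sum_le_exp_of_nonneg hx _

/-- The `k`-th power multilinear map `(v₁,…,v_k) ↦ Π_i (thetaLin n) v_i`. -/
noncomputable def thetaML {g : ℕ} (n : Fin g → ℤ) (k : ℕ) :
    ContinuousMultilinearMap ℂ (fun _ : Fin k => (Fin g → ℂ)) ℂ :=
  (ContinuousMultilinearMap.mkPiAlgebraFin ℂ k ℂ).compContinuousLinearMap
    (fun _ => thetaLin n)

lemma norm_thetaML_le {g : ℕ} (n : Fin g → ℤ) (k : ℕ) :
    ‖thetaML n k‖ ≤ (2 * Real.pi * Nsum n) ^ k := by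
  have hN := Nsum_nonneg n
  calc ‖thetaML n k‖ ≤ ‖ContinuousMultilinearMap.mkPiAlgebraFin ℂ k ℂ‖ *
        ∏ _i : Fin k, ‖thetaLin n‖ :=
      ContinuousMultilinearMap.norm_compContinuousLinearMap_le _ _
    _ = ‖thetaLin n‖ ^ k := by
        rw [ContinuousMultilinearMap.norm_mkPiAlgebraFin, one_mul,
          Finset.prod_const, Finset.card_univ, Fintype.card_fin]
    _ ≤ (2 * Real.pi * Nsum n) ^ k :=
        pow_le_pow_left₀ (norm_nonneg _) (norm_thetaLin_le n) k

lemma thetaML_apply_const {g : ℕ} (n : Fin g → ℤ) (k : ℕ) (y : Fin g → ℂ) :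
    thetaML n k (fun _ => y) = (thetaLin n y) ^ k := by
  rw [thetaML, ContinuousMultilinearMap.compContinuousLinearMap_apply,
    ContinuousMultilinearMap.mkPiAlgebraFin_apply, List.ofFn_const, List.prod_replicate]

/-- The candidate power series of `riemannTheta τ` centred at `z₀`. -/
noncomputable def thetaSeries {g : ℕ} (τ : Matrix (Fin g) (Fin g) ℂ) (z₀ : Fin g → ℂ) :
    FormalMultilinearSeries ℂ (Fin g → ℂ) ℂ :=
  fun k => ∑' n : Fin g → ℤ,
    (thetaTerm τ z₀ n * ((Nat.factorial k : ℕ) : ℂ)⁻¹) • thetaML n k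

section MainEstimates

variable {g : ℕ} {τ : Matrix (Fin g) (Fin g) ℂ} {c : ℝ}

/-- shorthand for the coercivity hypothesis -/
def Coer (τ : Matrix (Fin g) (Fin g) ℂ) (c : ℝ) : Prop :=
  ∀ x : Fin g → ℝ, c * ∑ i, x i ^ 2 ≤ ∑ i, ∑ j, x i * (τ i j).im * x j

lemma term_norm_le (hcoer : Coer τ c) (z₀ : Fin g → ℂ) (n : Fin g → ℤ) (k : ℕ) :
    ‖(thetaTerm τ z₀ n * ((Nat.factorial k : ℕ) : ℂ)⁻¹) • thetaML n k‖
      ≤ bound c (‖z₀‖ + 1) n := by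
  have hN := Nsum_nonneg n
  have hb0 : ‖thetaTerm τ z₀ n‖ ≤ bound c ‖z₀‖ n :=
    norm_thetaTerm_le hcoer z₀ (abs_im_le_pi_norm z₀) n
  have hfact : ‖(((Nat.factorial k : ℕ) : ℂ))⁻¹‖ = ((Nat.factorial k : ℕ) : ℝ)⁻¹ := by
    rw [norm_inv, Complex.norm_natCast]
  have h1 : ‖(thetaTerm τ z₀ n * ((Nat.factorial k : ℕ) : ℂ)⁻¹) • thetaML n k‖
      = ‖thetaTerm τ z₀ n‖ * ((Nat.factorial k : ℕ) : ℝ)⁻¹ * ‖thetaML n k‖ := by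
    rw [norm_smul (thetaTerm τ z₀ n * ((Nat.factorial k : ℕ) : ℂ)⁻¹) (thetaML n k),
      norm_mul, norm_inv, Complex.norm_natCast]
  rw [h1]
  have hfpos : (0:ℝ) < ((Nat.factorial k : ℕ) : ℝ) := by exact_mod_cast (Nat.factorial_pos k)
  calc ‖thetaTerm τ z₀ n‖ * ((Nat.factorial k : ℕ) : ℝ)⁻¹ * ‖thetaML n k‖
      ≤ bound c ‖z₀‖ n * ((Nat.factorial k : ℕ) : ℝ)⁻¹ * (2 * Real.pi * Nsum n) ^ k := by
        apply mul_le_mul _ (norm_thetaML_le n k) (norm_nonneg _) _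
        · exact mul_le_mul_of_nonneg_right hb0 (by positivity)
        · have := bound_nonneg c ‖z₀‖ n
          positivity
    _ = bound c ‖z₀‖ n * ((2 * Real.pi * Nsum n) ^ k / (Nat.factorial k : ℝ)) := by ring
    _ ≤ bound c ‖z₀‖ n * Real.exp (2 * Real.pi * Nsum n) :=
        mul_le_mul_of_nonneg_left
          (pow_div_factorial_le_exp _ (by positivity) k) (bound_nonneg _ _ _)
    _ = bound c (‖z₀‖ + 1) n := by
        rw [bound, bound, ← Real.exp_add]; congr 1; ring

lemma summable_term (hcoer : Coer τ c) (hc : 0 < c) (z₀ : Fin g → ℂ) (k : ℕ) :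
    Summable fun n : Fin g → ℤ =>
      (thetaTerm τ z₀ n * ((Nat.factorial k : ℕ) : ℂ)⁻¹) • thetaML n k :=
  Summable.of_norm_bounded (summable_bound g c (‖z₀‖ + 1) hc)
    (term_norm_le hcoer z₀ · k)

lemma thetaSeries_norm_le (hcoer : Coer τ c) (hc : 0 < c) (z₀ : Fin g → ℂ) (k : ℕ) :
    ‖thetaSeries τ z₀ k‖ ≤ ∑' n : Fin g → ℤ, bound c (‖z₀‖ + 1) n := by
  have hnormsum : Summable fun n : Fin g → ℤ =>
      ‖(thetaTerm τ z₀ n * ((Nat.factorial k : ℕ) : ℂ)⁻¹) • thetaML n k‖ :=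
    Summable.of_nonneg_of_le (fun _ => norm_nonneg _) (term_norm_le hcoer z₀ · k)
      (summable_bound g c (‖z₀‖ + 1) hc)
  calc ‖thetaSeries τ z₀ k‖
      ≤ ∑' n : Fin g → ℤ, ‖(thetaTerm τ z₀ n * ((Nat.factorial k : ℕ) : ℂ)⁻¹) • thetaML n k‖ :=
        norm_tsum_le_tsum_norm hnormsum
    _ ≤ ∑' n : Fin g → ℤ, bound c (‖z₀‖ + 1) n :=
        Summable.tsum_le_tsum (term_norm_le hcoer z₀ · k) hnormsum
          (summable_bound g c (‖z₀‖ + 1) hc)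

lemma thetaSeries_apply (hcoer : Coer τ c) (hc : 0 < c) (z₀ : Fin g → ℂ) (k : ℕ)
    (y : Fin g → ℂ) :
    thetaSeries τ z₀ k (fun _ => y)
      = ∑' n : Fin g → ℤ, thetaTerm τ z₀ n * (thetaLin n y) ^ k / (Nat.factorial k : ℂ) := by
  have hmap := ContinuousLinearMap.map_tsum
    (ContinuousMultilinearMap.apply ℂ (fun _ : Fin k => (Fin g → ℂ)) ℂ (fun _ => y))
    (summable_term hcoer hc z₀ k)
  have h0 : thetaSeries τ z₀ k (fun _ => y) = ContinuousMultilinearMap.apply ℂ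
      (fun _ : Fin k => (Fin g → ℂ)) ℂ (fun _ => y) (thetaSeries τ z₀ k) := rfl
  rw [h0, thetaSeries, hmap]
  refine tsum_congr fun n => ?_
  rw [ContinuousMultilinearMap.apply_apply, ContinuousMultilinearMap.smul_apply,
    thetaML_apply_const, smul_eq_mul]
  ring

end MainEstimates

end RiemannThetaAux

open RiemannThetaAux

set_option maxHeartbeats 2000000 in
/-- For a symmetric `g×g` matrix `τ` with positive definite imaginary part, the theta
series converges absolutely at every `z ∈ ℂ^g`, and the resulting function
`θ : ℂ^g → ℂ` is entire. -/
theorem riemannTheta_summable_and_analytic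
    (g : ℕ) (hg : 1 ≤ g) (τ : Matrix (Fin g) (Fin g) ℂ)
    (hτ : τ.IsSymm)
    (him : Matrix.PosDef (Matrix.of fun i j => (τ i j).im)) :
    (∀ z : Fin g → ℂ, Summable (fun n : Fin g → ℤ => thetaTerm τ z n)) ∧
      AnalyticOnNhd ℂ (riemannTheta τ) Set.univ := by
  classical
  obtain ⟨c, hcpos, hcoer0⟩ := posdef_coercive him
  have hcoer : Coer τ c := fun x => hcoer0 x
  have hsum : ∀ z : Fin g → ℂ, Summable fun n : Fin g → ℤ => thetaTerm τ z n := by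
    intro z
    exact Summable.of_norm_bounded (summable_bound g c ‖z‖ hcpos)
      (fun n => norm_thetaTerm_le hcoer z (abs_im_le_pi_norm z) n)
  refine ⟨hsum, ?_⟩
  intro z₀ _
  have hDsum : Summable fun n : Fin g → ℤ => bound c (‖z₀‖ + 1) n :=
    summable_bound g c (‖z₀‖ + 1) hcpos
  have hball : HasFPowerSeriesOnBall (riemannTheta τ) (thetaSeries τ z₀) z₀ 1 := by
    refine ⟨?_, ?_, ?_⟩
    · -- radius
      refine FormalMultilinearSeries.le_radius_of_bound _
        (∑' n : Fin g → ℤ, bound c (‖z₀‖ + 1) n) (fun k => ?_)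
      simpa using thetaSeries_norm_le hcoer hcpos z₀ k
    · exact zero_lt_one
    · intro y hy
      rw [EMetric.mem_ball, edist_zero_right] at hy
      have hy1 : ‖y‖ ≤ 1 := by
        have h2 : ‖y‖₊ < 1 := by rw [enorm_eq_nnnorm] at hy; exact_mod_cast hy
        exact_mod_cast h2.le
      have hlin_le : ∀ n : Fin g → ℤ, ‖thetaLin n y‖ ≤ 2 * Real.pi * Nsum n :=
        fun n => norm_thetaLin_apply_le n y hy1
      -- the doubly-indexed family
      have hFbound : ∀ q : (Fin g → ℤ) × ℕ,
          ‖thetaTerm τ z₀ q.1 * (thetaLin q.1 y) ^ q.2 / (Nat.factorial q.2 : ℂ)‖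
            ≤ bound c ‖z₀‖ q.1 * ((2 * Real.pi * Nsum q.1) ^ q.2 / (Nat.factorial q.2 : ℝ)) := by
        rintro ⟨n, k⟩
        have hN := Nsum_nonneg n
        have hb0 : ‖thetaTerm τ z₀ n‖ ≤ bound c ‖z₀‖ n :=
          norm_thetaTerm_le hcoer z₀ (abs_im_le_pi_norm z₀) n
        have hfpos : (0:ℝ) < (Nat.factorial k : ℝ) := by
          exact_mod_cast Nat.factorial_pos k
        rw [norm_div, norm_mul, norm_pow]
        have hfn : ‖((Nat.factorial k : ℕ) : ℂ)‖ = (Nat.factorial k : ℝ) := by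
          rw [Complex.norm_natCast]
        rw [hfn, ← mul_div_assoc]
        have hmain : ‖thetaTerm τ z₀ n‖ * ‖thetaLin n y‖ ^ k
            ≤ bound c ‖z₀‖ n * (2 * Real.pi * Nsum n) ^ k :=
          mul_le_mul hb0 (pow_le_pow_left₀ (norm_nonneg _) (hlin_le n) k)
            (by positivity) (bound_nonneg _ _ _)
        exact div_le_div_of_nonneg_right hmain hfpos.le
      have hGnonneg : ∀ q : (Fin g → ℤ) × ℕ,
          0 ≤ bound c ‖z₀‖ q.1 * ((2 * Real.pi * Nsum q.1) ^ q.2 / (Nat.factorial q.2 : ℝ)) := by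
        rintro ⟨n, k⟩
        have hN := Nsum_nonneg n
        have := bound_nonneg c ‖z₀‖ n
        positivity
      have hGsum : Summable fun q : (Fin g → ℤ) × ℕ =>
          bound c ‖z₀‖ q.1 * ((2 * Real.pi * Nsum q.1) ^ q.2 / (Nat.factorial q.2 : ℝ)) := by
        refine (summable_prod_of_nonneg hGnonneg).mpr ⟨fun n => ?_, ?_⟩
        · have h0 := (Real.summable_pow_div_factorial (2 * Real.pi * Nsum n)).mul_left
            (bound c ‖z₀‖ n)
          exact h0.congr fun k => rfl
        · refine Summable.of_nonneg_of_le (fun n => ?_) (fun n => ?_) hDsum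
          · exact tsum_nonneg fun k => hGnonneg (n, k)
          · have htsum : ∑' k : ℕ,
                bound c ‖z₀‖ n * ((2 * Real.pi * Nsum n) ^ k / (Nat.factorial k : ℝ))
                = bound c ‖z₀‖ n * Real.exp (2 * Real.pi * Nsum n) := by
              rw [tsum_mul_left]
              congr 1
              have hexp := NormedSpace.expSeries_div_hasSum_exp (2 * Real.pi * Nsum n)
              rw [← Real.exp_eq_exp_ℝ] at hexp
              exact hexp.tsum_eq
            rw [htsum, bound, bound, ← Real.exp_add]
            rw [Real.exp_le_exp]
            ring_nf
            exact le_refl _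
      have hFsum : Summable fun q : (Fin g → ℤ) × ℕ =>
          thetaTerm τ z₀ q.1 * (thetaLin q.1 y) ^ q.2 / (Nat.factorial q.2 : ℂ) :=
        Summable.of_norm_bounded hGsum hFbound
      have hfib : ∀ n : Fin g → ℤ,
          HasSum (fun k : ℕ => thetaTerm τ z₀ n * (thetaLin n y) ^ k / (Nat.factorial k : ℂ))
            (thetaTerm τ (z₀ + y) n) := by
        intro n
        have h := NormedSpace.expSeries_div_hasSum_exp (thetaLin n y)
        rw [← Complex.exp_eq_exp_ℂ] at h
        have h2 := h.mul_left (thetaTerm τ z₀ n)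
        rw [thetaTerm_add τ z₀ y n]
        refine h2.congr_fun fun k => ?_
        ring
      have htot : HasSum (fun q : (Fin g → ℤ) × ℕ =>
          thetaTerm τ z₀ q.1 * (thetaLin q.1 y) ^ q.2 / (Nat.factorial q.2 : ℂ))
          (riemannTheta τ (z₀ + y)) := by
        have h1 := hFsum.hasSum
        have h2 : HasSum (fun n : Fin g → ℤ => thetaTerm τ (z₀ + y) n) (∑' q, _) :=
          h1.prod_fiberwise hfib
        rw [riemannTheta, h2.tsum_eq]
        exact h1
      have hswap : HasSum ((fun q : (Fin g → ℤ) × ℕ =>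
          thetaTerm τ z₀ q.1 * (thetaLin q.1 y) ^ q.2 / (Nat.factorial q.2 : ℂ)) ∘
            (Equiv.prodComm ℕ (Fin g → ℤ))) (riemannTheta τ (z₀ + y)) :=
        ((Equiv.prodComm ℕ (Fin g → ℤ)).hasSum_iff).mpr htot
      have hfibk : ∀ k : ℕ,
          HasSum (fun n : Fin g → ℤ =>
            thetaTerm τ z₀ n * (thetaLin n y) ^ k / (Nat.factorial k : ℂ))
            (thetaSeries τ z₀ k (fun _ => y)) := by
        intro k
        have hsumk : Summable fun n : Fin g → ℤ =>
            thetaTerm τ z₀ n * (thetaLin n y) ^ k / (Nat.factorial k : ℂ) := by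
          refine Summable.of_norm_bounded hDsum fun n => ?_
          refine (hFbound (n, k)).trans ?_
          have hN := Nsum_nonneg n
          calc bound c ‖z₀‖ n * ((2 * Real.pi * Nsum n) ^ k / (Nat.factorial k : ℝ))
              ≤ bound c ‖z₀‖ n * Real.exp (2 * Real.pi * Nsum n) :=
                mul_le_mul_of_nonneg_left
                  (pow_div_factorial_le_exp _ (by positivity) k) (bound_nonneg _ _ _)
            _ = bound c (‖z₀‖ + 1) n := by
                rw [bound, bound, ← Real.exp_add]; congr 1; ring
        have heq : ∑' n : Fin g → ℤ,
            thetaTerm τ z₀ n * (thetaLin n y) ^ k / (Nat.factorial k : ℂ)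
            = thetaSeries τ z₀ k (fun _ => y) := (thetaSeries_apply hcoer hcpos z₀ k y).symm
        rw [← heq]
        exact hsumk.hasSum
      exact hswap.prod_fiberwise hfibk
  exact ⟨thetaSeries τ z₀, 1, hball⟩
end

section
/- Let g ≥ 1 and let (a₁,b₁), …, (a_g,b_g) be pairwise disjoint nonempty open bounded real intervals. Let q be a real polynomial of degree exactly g. Suppose that for each j = 1, …, g there is a continuous function ρ_j : [a_j, b_j] → ℝ with ρ_j(s) > 0 for all s ∈ (a_j, b_j), such that ∫_{a_j}^{b_j} q(s) ρ_j(s) ds = 0. Then q has exactly one root in each interval (a_j, b_j), each of these roots is simple, and q has no other roots in ℂ. -/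
open BigOperators

lemma root_of_integral_zero (a b : ℝ) (hab : a < b) (q : Polynomial ℝ)
    (ρ : ℝ → ℝ) (hρc : ContinuousOn ρ (Set.Icc a b))
    (hρp : ∀ s ∈ Set.Ioo a b, 0 < ρ s)
    (hint : ∫ s in a..b, q.eval s * ρ s = 0) :
    ∃ r ∈ Set.Ioo a b, q.eval r = 0 := by
  by_contra h
  push_neg at h
  have hint' : IntervalIntegrable (fun s => q.eval s * ρ s) MeasureTheory.volume a b := by
    apply ContinuousOn.intervalIntegrable
    exact q.continuous_aeval.continuousOn.mul (by rwa [Set.uIcc_of_le hab.le])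
  have key : (∀ x ∈ Set.Ioo a b, 0 < q.eval x) ∨ (∀ x ∈ Set.Ioo a b, q.eval x < 0) := by
    by_contra hk
    push_neg at hk
    obtain ⟨⟨x, hx, hx0⟩, ⟨y, hy, hy0⟩⟩ := hk
    have hx0' : q.eval x < 0 := lt_of_le_of_ne hx0 (h x hx)
    have hy0' : 0 < q.eval y := lt_of_le_of_ne hy0 (Ne.symm (h y hy))
    have hsub : Set.uIcc x y ⊆ Set.Ioo a b :=
      Set.OrdConnected.uIcc_subset Set.ordConnected_Ioo hx hy
    have h0 : (0:ℝ) ∈ Set.uIcc (q.eval x) (q.eval y) :=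
      Set.mem_uIcc.mpr (Or.inl ⟨hx0'.le, hy0'.le⟩)
    obtain ⟨z, hz, hz0⟩ := intermediate_value_uIcc (a := x) (b := y)
      (f := fun t => q.eval t) q.continuous_aeval.continuousOn h0
    exact h z (hsub hz) hz0
  rcases key with hp | hn
  · have : 0 < ∫ s in a..b, q.eval s * ρ s :=
      intervalIntegral.intervalIntegral_pos_of_pos_on hint'
        (fun x hx => mul_pos (hp x hx) (hρp x hx)) hab
    linarith
  · have : 0 < ∫ s in a..b, (-(q.eval s * ρ s)) := by
      apply intervalIntegral.intervalIntegral_pos_of_pos_on hint'.neg (fun x hx => ?_) hab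
      simp only [Pi.neg_apply]
      nlinarith [hρp x hx, hn x hx]
    rw [intervalIntegral.integral_neg, hint] at this
    simp at this

/-- Let `(a₁,b₁), …, (a_g,b_g)` be pairwise disjoint nonempty open bounded intervals and
let `q` be a real polynomial of degree exactly `g`. If for each `j` there is a weight
`ρ_j`, continuous on `[a_j, b_j]` and positive on `(a_j, b_j)`, with
`∫_{a_j}^{b_j} q(s) ρ_j(s) ds = 0`, then `q` has exactly one root in each interval
`(a_j, b_j)`, these roots are simple, and `q` has no other roots in `ℂ`: equivalently,
`q = leadingCoeff(q) · ∏_j (X − r_j)` with distinct real roots `r_j ∈ (a_j, b_j)`. -/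
theorem exists_simple_root_in_each_interval
    (g : ℕ) (hg : 1 ≤ g) (a b : Fin g → ℝ)
    (hab : ∀ j, a j < b j)
    (hdisj : ∀ j k, j ≠ k →
      Disjoint (Set.Ioo (a j) (b j)) (Set.Ioo (a k) (b k)))
    (q : Polynomial ℝ) (hdeg : q.degree = g)
    (hweight : ∀ j, ∃ ρ : ℝ → ℝ,
      ContinuousOn ρ (Set.Icc (a j) (b j)) ∧
      (∀ s ∈ Set.Ioo (a j) (b j), 0 < ρ s) ∧
      ∫ s in (a j)..(b j), q.eval s * ρ s = 0) :
    ∃ r : Fin g → ℝ,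
      (∀ j, r j ∈ Set.Ioo (a j) (b j)) ∧
      Function.Injective r ∧
      q = Polynomial.C q.leadingCoeff * ∏ j, (Polynomial.X - Polynomial.C (r j)) := by
  have hr : ∀ j : Fin g, ∃ r ∈ Set.Ioo (a j) (b j), q.eval r = 0 := by
    intro j
    obtain ⟨ρ, h1, h2, h3⟩ := hweight j
    exact root_of_integral_zero _ _ (hab j) q ρ h1 h2 h3
  choose r hrmem hroot using hr
  have hinj : Function.Injective r := by
    intro j k hjk
    by_contra hne
    exact Set.disjoint_left.mp (hdisj j k hne) (hrmem j) (hjk ▸ hrmem k)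
  refine ⟨r, hrmem, hinj, ?_⟩
  set p : Polynomial ℝ := ∏ j, (Polynomial.X - Polynomial.C (r j)) with hp
  have hpmonic : p.Monic := Polynomial.monic_prod_of_monic _ _ fun j _ => Polynomial.monic_X_sub_C _
  have hpdvd : p ∣ q := by
    apply Finset.prod_dvd_of_coprime
    · intro j _ k _ hjk
      exact Polynomial.isCoprime_X_sub_C_of_isUnit_sub
        (isUnit_iff_ne_zero.mpr (sub_ne_zero.mpr fun h => hjk (hinj h)))
    · intro j _
      exact Polynomial.dvd_iff_isRoot.mpr (hroot j)
  obtain ⟨c, hc⟩ := hpdvd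
  have hpdeg : p.degree = g := by
    rw [hp, Polynomial.degree_prod]
    simp [Polynomial.degree_X_sub_C]
  have hq0 : q ≠ 0 := fun h => by simp [h] at hdeg
  have hc0 : c ≠ 0 := fun h => hq0 (by simp [hc, h])
  have hp0 : p ≠ 0 := hpmonic.ne_zero
  have hqnat : q.natDegree = g := Polynomial.natDegree_eq_of_degree_eq_some hdeg
  have hpnat : p.natDegree = g := Polynomial.natDegree_eq_of_degree_eq_some hpdeg
  have hcnat : c.natDegree = 0 := by
    have := Polynomial.natDegree_mul hp0 hc0
    rw [← hc, hqnat, hpnat] at this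
    omega
  have hcC : c = Polynomial.C (c.coeff 0) := Polynomial.eq_C_of_natDegree_eq_zero hcnat
  have hlc : q.leadingCoeff = c.coeff 0 := by
    rw [hc, Polynomial.leadingCoeff_mul, hpmonic.leadingCoeff, one_mul,
      Polynomial.leadingCoeff, hcnat]
  rw [hlc, ← hcC, hc, mul_comm]
end

section
/- Let M > 0, let h : ℝ → ℝ be continuous, and let c ∈ ℝ. Then for every r ≥ M: ∫_M^r h(√s) ds/s = (2/√r) ∫_{√M}^{√r} h(t) dt + 2 ∫_{√M}^{√r} (1/t)·[ (1/t)∫_{√M}^{t} h(t') dt' − c ] dt + c · log(r/M). -/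
open intervalIntegral Set
open scoped Interval

/-- For `M > 0`, `h : ℝ → ℝ` continuous, `c ∈ ℝ` and `r ≥ M`:
`∫_M^r h(√s) ds/s = (2/√r) ∫_{√M}^{√r} h(t) dt
  + 2 ∫_{√M}^{√r} (1/t)·[(1/t)∫_{√M}^t h − c] dt + c·log(r/M)`. -/
theorem integral_log_decomposition
    (M : ℝ) (hM : 0 < M) (h : ℝ → ℝ) (hh : Continuous h) (c : ℝ)
    (r : ℝ) (hr : M ≤ r) :
    ∫ s in M..r, h (Real.sqrt s) / s =
      (2 / Real.sqrt r) * (∫ t in Real.sqrt M..Real.sqrt r, h t) +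
        2 * (∫ t in Real.sqrt M..Real.sqrt r,
          (1 / t) * ((1 / t) * (∫ t' in Real.sqrt M..t, h t') - c)) +
        c * Real.log (r / M) := by
  have hr0 : 0 < r := lt_of_lt_of_le hM hr
  set a := Real.sqrt M with ha_def
  set b := Real.sqrt r with hb_def
  have ha : 0 < a := Real.sqrt_pos.mpr hM
  have hab : a ≤ b := Real.sqrt_le_sqrt hr
  have hb : 0 < b := lt_of_lt_of_le ha hab
  have huIcc : [[a, b]] = Icc a b := Set.uIcc_of_le hab
  have hpos : ∀ x ∈ [[a, b]], 0 < x := by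
    intro x hx
    rw [huIcc] at hx
    exact lt_of_lt_of_le ha hx.1
  set F : ℝ → ℝ := fun t => ∫ t' in a..t, h t' with hF
  have hFderiv : ∀ t : ℝ, HasDerivAt F (h t) t := fun t =>
    intervalIntegral.integral_hasDerivAt_right (hh.intervalIntegrable _ _)
      (hh.stronglyMeasurableAtFilter _ _) hh.continuousAt
  have hFcont : Continuous F :=
    continuous_iff_continuousAt.mpr fun t => (hFderiv t).continuousAt
  -- Step 1: substitution s = t^2
  have hsq : ∀ x ∈ [[a, b]], HasDerivAt (fun x : ℝ => x ^ 2) (2 * x) x := by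
    intro x _; simpa using hasDerivAt_pow 2 x
  have himg : (fun x : ℝ => x ^ 2) '' [[a, b]] ⊆ {x : ℝ | 0 < x} := by
    rintro _ ⟨x, hx, rfl⟩
    exact pow_pos (hpos x hx) 2
  have hgcont : ContinuousOn (fun s => h (Real.sqrt s) / s)
      ((fun x : ℝ => x ^ 2) '' [[a, b]]) := by
    apply ContinuousOn.mono (s := {x : ℝ | 0 < x}) _ himg
    exact ((hh.comp Real.continuous_sqrt).continuousOn).div continuousOn_id
      (fun x hx => ne_of_gt hx)
  have hsub : (∫ x in a..b, ((fun s => h (Real.sqrt s) / s) ∘ fun x : ℝ => x ^ 2) x * (2 * x))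
      = ∫ s in (a ^ 2)..(b ^ 2), h (Real.sqrt s) / s :=
    intervalIntegral.integral_comp_mul_deriv' hsq (by fun_prop) hgcont
  have ha2 : a ^ 2 = M := Real.sq_sqrt hM.le
  have hb2 : b ^ 2 = r := Real.sq_sqrt hr0.le
  have hstep1 : (∫ s in M..r, h (Real.sqrt s) / s) = ∫ t in a..b, 2 * h t / t := by
    rw [← ha2, ← hb2, ← hsub]
    apply intervalIntegral.integral_congr
    intro x hx
    have hx0 : 0 < x := hpos x hx
    simp only [Function.comp]
    rw [Real.sqrt_sq hx0.le]
    field_simp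
  -- FTC for G = F / t
  have hGderiv : ∀ t ∈ [[a, b]], HasDerivAt (fun t => F t / t) (h t / t - F t / t ^ 2) t := by
    intro t ht
    have ht0 : t ≠ 0 := (hpos t ht).ne'
    have : HasDerivAt (fun y => F y / y) ((h t * t - F t * 1) / t ^ 2) t :=
      (hFderiv t).div (hasDerivAt_id t) ht0
    convert this using 1
    field_simp
  have hint1 : IntervalIntegrable (fun t => h t / t) MeasureTheory.volume a b := by
    apply ContinuousOn.intervalIntegrable
    exact (hh.continuousOn).div continuousOn_id (fun x hx => (hpos x hx).ne')
  have hint2 : IntervalIntegrable (fun t => F t / t ^ 2) MeasureTheory.volume a b := by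
    apply ContinuousOn.intervalIntegrable
    exact (hFcont.continuousOn).div (by fun_prop) (fun x hx => (pow_pos (hpos x hx) 2).ne')
  have hFa : F a = 0 := intervalIntegral.integral_same
  have hftc : (∫ t in a..b, (h t / t - F t / t ^ 2)) = F b / b := by
    rw [intervalIntegral.integral_eq_sub_of_hasDerivAt hGderiv (hint1.sub hint2)]
    rw [hFa]
    simp
  have hkey : (∫ t in a..b, h t / t) = F b / b + ∫ t in a..b, F t / t ^ 2 := by
    have := intervalIntegral.integral_sub hint1 hint2
    rw [hftc] at this
    linarith
  -- middle integral
  have hlog : (∫ t in a..b, (1 : ℝ) / t) = Real.log (b / a) :=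
    integral_one_div (by intro hmem; exact (hpos 0 hmem).false)
  have hmid : (∫ t in a..b, (1 / t) * ((1 / t) * F t - c))
      = (∫ t in a..b, F t / t ^ 2) - c * Real.log (b / a) := by
    have hcongr : (∫ t in a..b, (1 / t) * ((1 / t) * F t - c))
        = ∫ t in a..b, (F t / t ^ 2 - c * (1 / t)) := by
      apply intervalIntegral.integral_congr
      intro x hx
      have : x ≠ 0 := (hpos x hx).ne'
      field_simp
    rw [hcongr, intervalIntegral.integral_sub hint2 (by
      apply IntervalIntegrable.const_mul
      apply ContinuousOn.intervalIntegrable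
      exact continuousOn_const.div continuousOn_id (fun x hx => (hpos x hx).ne')),
      intervalIntegral.integral_const_mul, hlog]
  have hlogba : Real.log (b / a) = Real.log (r / M) / 2 := by
    rw [ha_def, hb_def, ← Real.sqrt_div hr0.le, Real.log_sqrt (by positivity)]
  -- combine
  rw [hstep1, hmid, hlogba]
  have h2 : (∫ t in a..b, 2 * h t / t) = 2 * ∫ t in a..b, h t / t := by
    rw [← intervalIntegral.integral_const_mul]
    apply intervalIntegral.integral_congr
    intro x hx; ring
  rw [h2, hkey]
  have hFb : F b = ∫ t in a..b, h t := rfl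
  rw [← hFb]
  field_simp
  ring
end

section
/- Let M > 0 and let h : ℝ → ℝ be continuous. Suppose the limit c := lim_{T→+∞} (1/T) ∫_{0}^{T} h(t) dt exists. Then ∫_M^r h(√s) ds/s = c · log r + o(log r) as r → +∞; that is, (∫_M^r h(√s) ds/s) / log r → c as r → +∞. -/
open Filter Real intervalIntegral MeasureTheory

lemma avg_tendsto {g : ℝ → ℝ} (hg : Continuous g) {L : ℝ}
    (hL : Tendsto g atTop (nhds L)) (a : ℝ) :
    Tendsto (fun x => (∫ t in a..x, g t) / x) atTop (nhds L) := by
  rw [Metric.tendsto_atTop]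
  intro ε hε
  obtain ⟨X₁, hX₁⟩ := Metric.tendsto_atTop.mp hL (ε / 2) (by positivity)
  set X : ℝ := max (max X₁ a) 0 with hXdef
  have hXX₁ : X₁ ≤ X := le_trans (le_max_left _ _) (le_max_left _ _)
  have hX0 : (0:ℝ) ≤ X := le_max_right _ _
  set D : ℝ → ℝ := fun x => (∫ t in a..x, g t) - L * x with hD
  have key : ∀ x, X ≤ x → |D x| ≤ |D X| + ε / 2 * x := by
    intro x hx
    have hsplit : ∫ t in a..x, g t = (∫ t in a..X, g t) + ∫ t in X..x, g t :=
      (integral_add_adjacent_intervals (hg.intervalIntegrable a X)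
        (hg.intervalIntegrable X x)).symm
    have hsub : ∫ t in X..x, (g t - L) = (∫ t in X..x, g t) - L * (x - X) := by
      rw [intervalIntegral.integral_sub (hg.intervalIntegrable X x)
        (intervalIntegrable_const), intervalIntegral.integral_const, smul_eq_mul, mul_comm]
    have hbound : |∫ t in X..x, (g t - L)| ≤ ε / 2 * |x - X| := by
      rw [← Real.norm_eq_abs]
      apply intervalIntegral.norm_integral_le_of_norm_le_const
      intro t ht
      rw [Real.norm_eq_abs]
      rw [Set.uIoc_of_le hx] at ht
      have : X₁ ≤ t := le_trans hXX₁ ht.1.le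
      have := hX₁ t this
      rw [Real.dist_eq] at this
      exact this.le
    have hDx : D x = D X + ∫ t in X..x, (g t - L) := by
      simp only [hD, hsplit, hsub]; ring
    calc |D x| ≤ |D X| + |∫ t in X..x, (g t - L)| := by rw [hDx]; exact abs_add_le _ _
      _ ≤ |D X| + ε / 2 * |x - X| := by linarith
      _ ≤ |D X| + ε / 2 * x := by
          have : |x - X| ≤ x := by rw [abs_of_nonneg (by linarith)]; linarith
          nlinarith
  refine ⟨max (X + 1) (2 * (|D X| + 1) / ε), fun x hx => ?_⟩
  have hx1 : X + 1 ≤ x := le_trans (le_max_left _ _) hx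
  have hx2 : 2 * (|D X| + 1) / ε ≤ x := le_trans (le_max_right _ _) hx
  have hxpos : 0 < x := by linarith
  have hgoal : dist ((∫ t in a..x, g t) / x) L = |D x| / x := by
    rw [Real.dist_eq]
    have : (∫ t in a..x, g t) / x - L = D x / x := by
      simp only [hD]; field_simp
    rw [this, abs_div, abs_of_pos hxpos]
  rw [hgoal]
  have h1 : |D x| ≤ |D X| + ε / 2 * x := key x (by linarith)
  have h2 : |D X| / x < ε / 2 := by
    rw [div_lt_iff₀ hxpos]
    have : 2 * (|D X| + 1) ≤ ε * x := by
      rw [div_le_iff₀ hε] at hx2; linarith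
    linarith
  calc |D x| / x ≤ (|D X| + ε / 2 * x) / x := by gcongr
      _ = |D X| / x + ε / 2 := by
        rw [add_div, mul_div_assoc, div_self hxpos.ne', mul_one]
      _ < ε / 2 + ε / 2 := by linarith
      _ = ε := by ring

/-- If `h : ℝ → ℝ` is continuous and `(1/T)∫_0^T h(t) dt → c` as `T → +∞`, then for
any `M > 0` one has `∫_M^r h(√s) ds/s = c·log r + o(log r)` as `r → +∞`, i.e. the
quotient by `log r` tends to `c`. -/
theorem integral_log_leading_term
    (M : ℝ) (hM : 0 < M) (h : ℝ → ℝ) (hh : Continuous h) (c : ℝ)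
    (hc : Filter.Tendsto (fun T : ℝ => (1 / T) * ∫ t in (0:ℝ)..T, h t)
      Filter.atTop (nhds c)) :
    Filter.Tendsto
      (fun r : ℝ => (∫ s in M..r, h (Real.sqrt s) / s) / Real.log r)
      Filter.atTop (nhds c) := by
  -- the primitive of h
  set H : ℝ → ℝ := fun T => ∫ t in (0:ℝ)..T, h t with hHdef
  have hH : ∀ x : ℝ, HasDerivAt H (h x) x := fun x =>
    intervalIntegral.integral_hasDerivAt_right (hh.intervalIntegrable 0 x)
      (hh.stronglyMeasurableAtFilter _ _) hh.continuousAt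
  have hHc : Continuous H := by
    rw [continuous_iff_continuousAt]; exact fun x => (hH x).continuousAt
  -- g u = H(e^u)/e^u tends to c
  set g : ℝ → ℝ := fun u => H (Real.exp u) / Real.exp u with hgdef
  have hgc : Continuous g :=
    (hHc.comp Real.continuous_exp).div Real.continuous_exp fun u => (Real.exp_pos u).ne'
  have hgL : Filter.Tendsto g Filter.atTop (nhds c) := by
    have := hc.comp Real.tendsto_exp_atTop
    refine this.congr fun u => ?_
    simp only [Function.comp, hgdef, one_div_mul_eq_div, hHdef]
  set b : ℝ := Real.log M / 2 with hbdef
  -- the key integral identity : ∫_b^Y h(e^u) du = g Y - g b + ∫_b^Y g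
  have hF : ∀ x : ℝ, HasDerivAt (fun u => H (Real.exp u) * Real.exp (-u))
      (h (Real.exp x) - g x) x := by
    intro x
    have h1 : HasDerivAt (fun u => H (Real.exp u)) (h (Real.exp x) * Real.exp x) x :=
      (hH (Real.exp x)).comp x (Real.hasDerivAt_exp x)
    have h2 : HasDerivAt (fun u : ℝ => Real.exp (-u)) (-Real.exp (-x)) x := by
      have := (Real.hasDerivAt_exp (-x)).comp x ((hasDerivAt_id x).neg)
      simpa [Function.comp_def] using this
    have : HasDerivAt (fun u => H (Real.exp u) * Real.exp (-u))
        (h (Real.exp x) * Real.exp x * Real.exp (-x) + H (Real.exp x) * -Real.exp (-x)) x :=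
      h1.mul h2
    convert this using 1
    simp only [hgdef, Real.exp_neg]
    field_simp
    ring
  have hK : ∀ Y : ℝ, ∫ u in b..Y, h (Real.exp u) =
      g Y - g b + ∫ u in b..Y, g u := by
    intro Y
    have hint : ∫ u in b..Y, (h (Real.exp u) - g u) =
        H (Real.exp Y) * Real.exp (-Y) - H (Real.exp b) * Real.exp (-b) :=
      intervalIntegral.integral_eq_sub_of_hasDerivAt (fun x _ => hF x)
        (((hh.comp Real.continuous_exp).sub hgc).intervalIntegrable b Y)
    have hsplit : ∫ u in b..Y, (h (Real.exp u) - g u) =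
        (∫ u in b..Y, h (Real.exp u)) - ∫ u in b..Y, g u :=
      intervalIntegral.integral_sub ((hh.comp Real.continuous_exp).intervalIntegrable b Y)
        (hgc.intervalIntegrable b Y)
    have hgY : H (Real.exp Y) * Real.exp (-Y) = g Y := by
      simp only [hgdef, Real.exp_neg, div_eq_mul_inv]
    have hgb : H (Real.exp b) * Real.exp (-b) = g b := by
      simp only [hgdef, Real.exp_neg, div_eq_mul_inv]
    rw [hsplit, hgY, hgb] at hint
    linarith
  -- the average limit
  have havg : Filter.Tendsto
      (fun Y : ℝ => (∫ u in b..Y, h (Real.exp u)) / Y) Filter.atTop (nhds c) := by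
    have h1 : Filter.Tendsto (fun Y : ℝ => g Y / Y) Filter.atTop (nhds 0) :=
      Filter.Tendsto.div_atTop hgL Filter.tendsto_id
    have h2 : Filter.Tendsto (fun Y : ℝ => g b / Y) Filter.atTop (nhds 0) :=
      Filter.Tendsto.div_atTop tendsto_const_nhds Filter.tendsto_id
    have h3 := avg_tendsto hgc hgL b
    have := (h1.sub h2).add h3
    rw [sub_zero, zero_add] at this
    refine this.congr fun Y => ?_
    rw [hK Y]
    ring
  -- substitution: for r > 0
  have hsubst : ∀ r : ℝ, 0 < r →
      (∫ s in M..r, h (Real.sqrt s) / s) =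
        2 * ∫ u in b..(Real.log r / 2), h (Real.exp u) := by
    intro r hr
    have hf : ∀ x ∈ Set.uIcc b (Real.log r / 2),
        HasDerivAt (fun u => Real.exp (2 * u)) (2 * Real.exp (2 * x)) x := by
      intro x _
      have h0 : HasDerivAt (fun u : ℝ => 2 * u) 2 x := by simpa using (hasDerivAt_id x).const_mul 2
      have := h0.exp
      convert this using 1
      ring
    have hf' : ContinuousOn (fun x => 2 * Real.exp (2 * x)) (Set.uIcc b (Real.log r / 2)) :=
      (continuous_const.mul (Real.continuous_exp.comp (continuous_const.mul continuous_id))).continuousOn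
    have hgcont : ContinuousOn (fun s => h (Real.sqrt s) / s)
        ((fun u => Real.exp (2 * u)) '' Set.uIcc b (Real.log r / 2)) := by
      apply ContinuousOn.mono (s := Set.Ioi (0:ℝ))
      · exact ((hh.comp Real.continuous_sqrt).continuousOn).div continuousOn_id
          fun s hs => ne_of_gt hs
      · rintro _ ⟨x, _, rfl⟩; exact Real.exp_pos _
    have key := intervalIntegral.integral_comp_smul_deriv' hf hf' hgcont
    have heq : (fun x => (2 * Real.exp (2 * x)) •
        ((fun s => h (Real.sqrt s) / s) ∘ fun u => Real.exp (2 * u)) x) =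
        fun x => 2 * h (Real.exp x) := by
      funext x
      have hsq : Real.sqrt (Real.exp (2 * x)) = Real.exp x := by
        rw [show (2:ℝ) * x = x + x by ring, Real.exp_add,
          Real.sqrt_mul_self (Real.exp_pos x).le]
      simp only [Function.comp, smul_eq_mul, hsq]
      have := (Real.exp_pos (2 * x)).ne'
      field_simp
    rw [heq] at key
    have hfb : Real.exp (2 * b) = M := by
      rw [hbdef]; rw [show 2 * (Real.log M / 2) = Real.log M by ring, Real.exp_log hM]
    have hfr : Real.exp (2 * (Real.log r / 2)) = r := by
      rw [show 2 * (Real.log r / 2) = Real.log r by ring, Real.exp_log hr]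
    rw [hfb, hfr] at key
    rw [← key, intervalIntegral.integral_const_mul]
  -- conclude
  have hcomp : Filter.Tendsto
      (fun r : ℝ => (∫ u in b..(Real.log r / 2), h (Real.exp u)) / (Real.log r / 2))
      Filter.atTop (nhds c) :=
    havg.comp (Real.tendsto_log_atTop.atTop_div_const two_pos)
  refine hcomp.congr' ?_
  filter_upwards [Filter.eventually_gt_atTop (0:ℝ)] with r hr
  rw [hsubst r hr]
  rw [show Real.log r = 2 * (Real.log r / 2) by ring]
  rw [mul_div_mul_left _ _ (two_ne_zero)]
  ring_nf
end

section
/- Let g ≥ 1 and let Ω ∈ ℝ^g have the good Diophantine property with constants δ₁, δ₂ > 0. Let ℓ : ℤ^g → ℂ satisfy |ℓ_m| ≤ c₁ e^{−c₂‖m‖} for all m ∈ ℤ^g, for some constants c₁, c₂ > 0, and define h(t) = Σ_{m ∈ ℤ^g} ℓ_m e^{−i(mᵗΩ)t} (the series converges absolutely for every t ∈ ℝ) and Ĥ = Σ_{m ∈ ℤ^g, mᵗΩ = 0} ℓ_m. Then for every a ∈ ℝ there exist constants K > 0 and t₀ > a such that |(1/t)∫_a^t h(s) ds − Ĥ| ≤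 K/t for all t ≥ t₀. -/
open BigOperators

lemma aux_summable_exp_int {ε : ℝ} (hε : 0 < ε) :
    Summable (fun n : ℤ => Real.exp (-ε * |(n : ℝ)|)) := by
  have hnat : Summable (fun n : ℕ => Real.exp ((n : ℝ) * (-ε))) :=
    Real.summable_exp_nat_mul_iff.mpr (by linarith)
  apply Summable.of_nat_of_neg
  · exact hnat.congr fun n => by push_cast; rw [abs_of_nonneg (by positivity)]; ring_nf
  · exact hnat.congr fun n => by push_cast; rw [abs_neg, abs_of_nonneg (by positivity)]; ring_nf

lemma aux_summable_exp_pi (n : ℕ) {ε : ℝ} (hε : 0 < ε) :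
    Summable (fun m : Fin n → ℤ => Real.exp (-ε * ∑ j, |(m j : ℝ)|)) := by
  induction n with
  | zero => exact Summable.of_finite
  | succ n ih =>
    rw [← (Fin.consEquiv (fun _ : Fin (n + 1) => ℤ)).summable_iff]
    have key : ∀ p : ℤ × (Fin n → ℤ),
        Real.exp (-ε * |(p.1 : ℝ)|) * Real.exp (-ε * ∑ j, |(p.2 j : ℝ)|) =
        ((fun m : Fin (n + 1) → ℤ => Real.exp (-ε * ∑ j, |(m j : ℝ)|)) ∘
          (Fin.consEquiv (fun _ : Fin (n + 1) => ℤ))) p := by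
      intro p
      simp only [Function.comp_apply, Fin.consEquiv_apply]
      rw [Fin.sum_univ_succ, Fin.cons_zero, mul_add, Real.exp_add]
      simp [Fin.cons_succ]
    exact (((aux_summable_exp_int hε).mul_of_nonneg ih
      (fun _ => (Real.exp_pos _).le) (fun _ => (Real.exp_pos _).le)).congr key)

lemma aux_rpow_le_exp {δ c : ℝ} (hδ : 0 < δ) (hc : 0 < c) :
    ∃ C : ℝ, 1 ≤ C ∧ ∀ x : ℝ, 0 ≤ x → x ^ δ ≤ C * Real.exp (c * x) := by
  set n := ⌈δ⌉₊ with hn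
  refine ⟨max 1 ((Nat.factorial n : ℝ) / c ^ n), le_max_left _ _, fun x hx => ?_⟩
  rcases le_total x 1 with hx1 | hx1
  · have h1 : x ^ δ ≤ 1 := Real.rpow_le_one hx hx1 hδ.le
    have h2 : (1 : ℝ) ≤ Real.exp (c * x) := Real.one_le_exp (by positivity)
    have h3 : (1 : ℝ) ≤ max 1 ((Nat.factorial n : ℝ) / c ^ n) := le_max_left _ _
    nlinarith
  · have h1 : x ^ δ ≤ x ^ (n : ℝ) := Real.rpow_le_rpow_of_exponent_le hx1 (Nat.le_ceil δ)
    rw [Real.rpow_natCast] at h1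
    have h2 : (c * x) ^ n / (Nat.factorial n : ℝ) ≤ Real.exp (c * x) := by
      calc (c * x) ^ n / (Nat.factorial n : ℝ)
          ≤ ∑ i ∈ Finset.range (n + 1), (c * x) ^ i / (Nat.factorial i : ℝ) :=
            Finset.single_le_sum (f := fun i => (c * x) ^ i / (Nat.factorial i : ℝ))
              (fun i _ => by positivity) (Finset.self_mem_range_succ n)
        _ ≤ Real.exp (c * x) := Real.sum_le_exp_of_nonneg (by positivity) _
    have hfac : (0 : ℝ) < (Nat.factorial n : ℝ) := by positivity
    have hcn : (0 : ℝ) < c ^ n := by positivity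
    have h3 : (c * x) ^ n ≤ (Nat.factorial n : ℝ) * Real.exp (c * x) := by
      rw [div_le_iff₀ hfac] at h2; linarith [h2]
    rw [mul_pow] at h3
    have h4 : x ^ n ≤ (Nat.factorial n : ℝ) / c ^ n * Real.exp (c * x) := by
      rw [div_mul_eq_mul_div, le_div_iff₀ hcn]; nlinarith
    calc x ^ δ ≤ x ^ n := h1
      _ ≤ (Nat.factorial n : ℝ) / c ^ n * Real.exp (c * x) := h4
      _ ≤ max 1 ((Nat.factorial n : ℝ) / c ^ n) * Real.exp (c * x) := by
          gcongr; exact le_max_right _ _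

/-- Let `Ω ∈ ℝ^g` have the good Diophantine property with constants `δ₁, δ₂ > 0`, and
let `ℓ : ℤ^g → ℂ` have exponentially decaying coefficients. Then the series
`h(t) = Σ_m ℓ_m e^{−i(mᵗΩ)t}` converges absolutely for every `t`, and with
`Ĥ = Σ_{mᵗΩ = 0} ℓ_m`, for every `a ∈ ℝ` there are `K > 0` and `t₀ > a` with
`|(1/t)∫_a^t h(s) ds − Ĥ| ≤ K/t` for all `t ≥ t₀`. -/
theorem diophantine_time_average
    (g : ℕ) (hg : 1 ≤ g) (Ω : Fin g → ℝ) (δ₁ δ₂ : ℝ) (hδ₁ : 0 < δ₁) (hδ₂ : 0 < δ₂)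
    (hdio : ∀ m : Fin g → ℤ, (∑ j, (m j : ℝ) * Ω j) ≠ 0 →
      δ₁ * (Real.sqrt (∑ j, ((m j : ℝ)) ^ 2)) ^ (-δ₂) ≤ |∑ j, (m j : ℝ) * Ω j|)
    (ℓ : (Fin g → ℤ) → ℂ) (c₁ c₂ : ℝ) (hc₁ : 0 < c₁) (hc₂ : 0 < c₂)
    (hℓ : ∀ m : Fin g → ℤ,
      ‖ℓ m‖ ≤ c₁ * Real.exp (-c₂ * Real.sqrt (∑ j, ((m j : ℝ)) ^ 2))) :
    (∀ t : ℝ, Summable (fun m : Fin g → ℤ =>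
      ℓ m * Complex.exp (-Complex.I * ((∑ j, (m j : ℝ) * Ω j : ℝ) : ℂ) * (t : ℂ)))) ∧
    ∀ a : ℝ, ∃ K : ℝ, 0 < K ∧ ∃ t₀ : ℝ, a < t₀ ∧ ∀ t : ℝ, t₀ ≤ t →
      ‖(1 / (t : ℂ)) *
          (∫ s in a..t, ∑' m : Fin g → ℤ,
            ℓ m * Complex.exp (-Complex.I * ((∑ j, (m j : ℝ) * Ω j : ℝ) : ℂ) * (s : ℂ))) -
          ∑' m : {m : Fin g → ℤ // (∑ j, (m j : ℝ) * Ω j) = 0}, ℓ m‖ ≤ K / t := by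
  have habs_exp : ∀ x s : ℝ, ‖Complex.exp (-Complex.I * (x : ℂ) * (s : ℂ))‖ = 1 := by
    intro x s
    rw [Complex.norm_exp]
    norm_num [Complex.mul_re]
  have hnorm : ∀ (m : Fin g → ℤ) (s : ℝ),
      ‖ℓ m * Complex.exp (-Complex.I * ((∑ j, (m j : ℝ) * Ω j : ℝ) : ℂ) * (s : ℂ))‖
        ≤ c₁ * Real.exp (-c₂ * Real.sqrt (∑ j, ((m j : ℝ)) ^ 2)) := by
    intro m s
    rw [norm_mul, habs_exp, mul_one]
    exact hℓ m
  have hgpos : (0 : ℝ) < g := by exact_mod_cast Nat.lt_of_lt_of_le Nat.zero_lt_one hg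
  have hNle : ∀ m : Fin g → ℤ, ∑ j, |(m j : ℝ)| ≤ g * Real.sqrt (∑ j, ((m j : ℝ)) ^ 2) := by
    intro m
    have hsingle : ∀ j : Fin g, |(m j : ℝ)| ≤ Real.sqrt (∑ j, ((m j : ℝ)) ^ 2) := by
      intro j
      rw [← Real.sqrt_sq_eq_abs]
      exact Real.sqrt_le_sqrt (Finset.single_le_sum (fun i _ => sq_nonneg ((m i : ℝ)))
        (Finset.mem_univ j))
    calc ∑ j, |(m j : ℝ)| ≤ ∑ _j : Fin g, Real.sqrt (∑ j, ((m j : ℝ)) ^ 2) :=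
          Finset.sum_le_sum fun j _ => hsingle j
      _ = g * Real.sqrt (∑ j, ((m j : ℝ)) ^ 2) := by
          rw [Finset.sum_const, Finset.card_univ, Fintype.card_fin, nsmul_eq_mul]
  have hbase : ∀ ε : ℝ, 0 < ε →
      Summable (fun m : Fin g → ℤ => Real.exp (-ε * Real.sqrt (∑ j, ((m j : ℝ)) ^ 2))) := by
    intro ε hε
    have hεg : 0 < ε / g := by positivity
    apply Summable.of_nonneg_of_le (fun m => (Real.exp_pos _).le)
      (fun m => ?_) (aux_summable_exp_pi g hεg)
    apply Real.exp_le_exp.mpr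
    rw [neg_mul, neg_mul, neg_le_neg_iff, div_mul_eq_mul_div, div_le_iff₀ hgpos]
    nlinarith [hNle m, hε.le, Real.sqrt_nonneg (∑ j, ((m j : ℝ)) ^ 2)]
  have part1 : ∀ t : ℝ, Summable (fun m : Fin g → ℤ =>
      ℓ m * Complex.exp (-Complex.I * ((∑ j, (m j : ℝ) * Ω j : ℝ) : ℂ) * (t : ℂ))) := by
    intro t
    exact Summable.of_norm_bounded ((hbase c₂ hc₂).mul_left c₁) fun m => hnorm m t
  refine ⟨part1, fun a => ?_⟩
  obtain ⟨C, hC1, hC⟩ := aux_rpow_le_exp hδ₂ (half_pos hc₂)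
  set Sf : (Fin g → ℤ) → ℝ := fun m =>
    2 * c₁ * C / δ₁ * Real.exp (-(c₂ / 2) * Real.sqrt (∑ j, ((m j : ℝ)) ^ 2)) with hSf
  have hSf_nonneg : ∀ m, 0 ≤ Sf m := fun m => by
    rw [hSf]; positivity
  have hSf_sum : Summable Sf := (hbase (c₂ / 2) (half_pos hc₂)).mul_left _
  set S := ∑' m, Sf m with hS
  have hS0 : 0 ≤ S := tsum_nonneg hSf_nonneg
  set HH := ∑' m : {m : Fin g → ℤ // (∑ j, (m j : ℝ) * Ω j) = 0}, ℓ m with hHH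
  have hHH0 : 0 ≤ ‖HH‖ := norm_nonneg _
  have hKpos : 0 < |a| * ‖HH‖ + S + 1 := by
    have : 0 ≤ |a| * ‖HH‖ := mul_nonneg (abs_nonneg a) hHH0
    linarith
  refine ⟨|a| * ‖HH‖ + S + 1, hKpos, max (a + 1) 1,
    lt_of_lt_of_le (lt_add_one a) (le_max_left _ _), fun t ht => ?_⟩
  have ht1 : (1 : ℝ) ≤ t := le_trans (le_max_right _ _) ht
  have htpos : (0 : ℝ) < t := lt_of_lt_of_le one_pos ht1
  have hat : a ≤ t := le_trans (le_trans (lt_add_one a).le (le_max_left _ _)) ht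
  -- interchange of sum and integral
  have key : HasSum (fun m : Fin g → ℤ => ∫ s in a..t,
        ℓ m * Complex.exp (-Complex.I * ((∑ j, (m j : ℝ) * Ω j : ℝ) : ℂ) * (s : ℂ)))
      (∫ s in a..t, ∑' m : Fin g → ℤ,
        ℓ m * Complex.exp (-Complex.I * ((∑ j, (m j : ℝ) * Ω j : ℝ) : ℂ) * (s : ℂ))) := by
    apply intervalIntegral.hasSum_integral_of_dominated_convergence
      (bound := fun m _ => c₁ * Real.exp (-c₂ * Real.sqrt (∑ j, ((m j : ℝ)) ^ 2)))
    · intro m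
      exact Continuous.aestronglyMeasurable (by fun_prop)
    · intro m
      filter_upwards with s _
      exact hnorm m s
    · filter_upwards with s _
      exact (hbase c₂ hc₂).mul_left c₁
    · exact intervalIntegrable_const
    · filter_upwards with s _
      exact (part1 s).hasSum
  set F : (Fin g → ℤ) → ℂ := fun m => ℓ m *
    (if (∑ j, (m j : ℝ) * Ω j) = 0 then ((t - a : ℝ) : ℂ)
     else (Complex.exp (-Complex.I * ((∑ j, (m j : ℝ) * Ω j : ℝ) : ℂ) * (t : ℂ)) -
           Complex.exp (-Complex.I * ((∑ j, (m j : ℝ) * Ω j : ℝ) : ℂ) * (a : ℂ))) /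
          (-Complex.I * ((∑ j, (m j : ℝ) * Ω j : ℝ) : ℂ))) with hF
  have hInt : ∀ m : Fin g → ℤ, (∫ s in a..t,
      ℓ m * Complex.exp (-Complex.I * ((∑ j, (m j : ℝ) * Ω j : ℝ) : ℂ) * (s : ℂ))) = F m := by
    intro m
    rw [intervalIntegral.integral_const_mul, hF]
    congr 1
    split_ifs with h0
    · rw [h0]
      simp
    · have hcne : -Complex.I * ((∑ j, (m j : ℝ) * Ω j : ℝ) : ℂ) ≠ 0 := by
        apply mul_ne_zero (neg_ne_zero.mpr Complex.I_ne_zero)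
        exact_mod_cast h0
      exact integral_exp_mul_complex hcne
  have hIsum : Summable F := key.summable.congr hInt
  have hIval : (∫ s in a..t, ∑' m : Fin g → ℤ,
      ℓ m * Complex.exp (-Complex.I * ((∑ j, (m j : ℝ) * Ω j : ℝ) : ℂ) * (s : ℂ)))
      = ∑' m, F m := by
    rw [← key.tsum_eq]
    exact tsum_congr hInt
  set s0 : Set (Fin g → ℤ) := {m | (∑ j, (m j : ℝ) * Ω j) = 0} with hs0
  have hsplit : (∑' x : ↥s0, F ↑x) + (∑' x : ↥s0ᶜ, F ↑x) = ∑' m, F m :=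
    hIsum.tsum_subtype_add_tsum_subtype_compl s0
  have h1 : (∑' x : ↥s0, F ↑x) = ((t - a : ℝ) : ℂ) * HH := by
    calc (∑' x : ↥s0, F ↑x) = ∑' x : ↥s0, ℓ ↑x * ((t - a : ℝ) : ℂ) :=
          tsum_congr fun x => by rw [hF]; exact congrArg _ (if_pos x.2)
      _ = (∑' x : ↥s0, ℓ ↑x) * ((t - a : ℝ) : ℂ) := tsum_mul_right
      _ = ((t - a : ℝ) : ℂ) * HH := by rw [mul_comm, hHH]; rfl
  have hnormF : ∀ x : ↥s0ᶜ, ‖F ↑x‖ ≤ Sf ↑x := by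
    rintro ⟨m, hm⟩
    have hω : (∑ j, (m j : ℝ) * Ω j) ≠ 0 := hm
    have hωpos : 0 < |∑ j, (m j : ℝ) * Ω j| := abs_pos.mpr hω
    -- N m ≥ 1
    have hm0 : m ≠ 0 := by
      intro h
      apply hω
      rw [h]
      simp
    obtain ⟨j₀, hj₀⟩ := Function.ne_iff.mp hm0
    have hj₀' : (1 : ℝ) ≤ |(m j₀ : ℝ)| := by
      have := Int.one_le_abs (by simpa using hj₀)
      calc (1 : ℝ) ≤ (|m j₀| : ℤ) := by exact_mod_cast this
        _ = |(m j₀ : ℝ)| := by push_cast; rfl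
    have hsum1 : (1 : ℝ) ≤ ∑ j, ((m j : ℝ)) ^ 2 := by
      have h2 : (1 : ℝ) ≤ ((m j₀ : ℝ)) ^ 2 := by nlinarith [hj₀', abs_nonneg ((m j₀ : ℝ)), sq_abs ((m j₀ : ℝ))]
      exact le_trans h2 (Finset.single_le_sum (fun i _ => sq_nonneg ((m i : ℝ))) (Finset.mem_univ j₀))
    have hN1 : (1 : ℝ) ≤ Real.sqrt (∑ j, ((m j : ℝ)) ^ 2) := by
      rw [show (1 : ℝ) = Real.sqrt 1 by simp]
      exact Real.sqrt_le_sqrt hsum1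
    have hNpos : (0 : ℝ) < Real.sqrt (∑ j, ((m j : ℝ)) ^ 2) := lt_of_lt_of_le one_pos hN1
    set N := Real.sqrt (∑ j, ((m j : ℝ)) ^ 2) with hNdef
    have hpow : (0 : ℝ) < N ^ δ₂ := Real.rpow_pos_of_pos hNpos δ₂
    have hdio' : δ₁ / N ^ δ₂ ≤ |∑ j, (m j : ℝ) * Ω j| := by
      have := hdio m hω
      rwa [Real.rpow_neg hNpos.le, ← div_eq_mul_inv] at this
    have hdlo : δ₁ ≤ |∑ j, (m j : ℝ) * Ω j| * N ^ δ₂ := (div_le_iff₀ hpow).mp hdio'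
    have h4 : 2 / |∑ j, (m j : ℝ) * Ω j| ≤ 2 * N ^ δ₂ / δ₁ := by
      rw [div_le_div_iff₀ hωpos hδ₁]
      nlinarith
    have hJ : ‖(Complex.exp (-Complex.I * ((∑ j, (m j : ℝ) * Ω j : ℝ) : ℂ) * (t : ℂ)) -
           Complex.exp (-Complex.I * ((∑ j, (m j : ℝ) * Ω j : ℝ) : ℂ) * (a : ℂ))) /
          (-Complex.I * ((∑ j, (m j : ℝ) * Ω j : ℝ) : ℂ))‖ ≤ 2 / |∑ j, (m j : ℝ) * Ω j| := by
      rw [norm_div]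
      have hden : ‖-Complex.I * ((∑ j, (m j : ℝ) * Ω j : ℝ) : ℂ)‖ = |∑ j, (m j : ℝ) * Ω j| := by
        rw [norm_mul, norm_neg, Complex.norm_I,
          Complex.norm_real, Real.norm_eq_abs, one_mul]
      rw [hden]
      gcongr
      calc ‖Complex.exp (-Complex.I * ((∑ j, (m j : ℝ) * Ω j : ℝ) : ℂ) * (t : ℂ)) -
           Complex.exp (-Complex.I * ((∑ j, (m j : ℝ) * Ω j : ℝ) : ℂ) * (a : ℂ))‖
          ≤ ‖Complex.exp (-Complex.I * ((∑ j, (m j : ℝ) * Ω j : ℝ) : ℂ) * (t : ℂ))‖ +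
            ‖Complex.exp (-Complex.I * ((∑ j, (m j : ℝ) * Ω j : ℝ) : ℂ) * (a : ℂ))‖ :=
            norm_sub_le _ _
        _ = 2 := by
            rw [habs_exp, habs_exp]; norm_num
    show ‖F m‖ ≤ Sf m
    calc ‖F m‖ = ‖ℓ m‖ * ‖(Complex.exp (-Complex.I * ((∑ j, (m j : ℝ) * Ω j : ℝ) : ℂ) * (t : ℂ)) -
           Complex.exp (-Complex.I * ((∑ j, (m j : ℝ) * Ω j : ℝ) : ℂ) * (a : ℂ))) /
          (-Complex.I * ((∑ j, (m j : ℝ) * Ω j : ℝ) : ℂ))‖ := by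
          rw [hF]
          simp only [if_neg hω]
          rw [norm_mul]
      _ ≤ ‖ℓ m‖ * (2 / |∑ j, (m j : ℝ) * Ω j|) :=
          mul_le_mul_of_nonneg_left hJ (norm_nonneg _)
      _ ≤ ‖ℓ m‖ * (2 * N ^ δ₂ / δ₁) :=
          mul_le_mul_of_nonneg_left h4 (norm_nonneg _)
      _ ≤ (c₁ * Real.exp (-c₂ * N)) * (2 * N ^ δ₂ / δ₁) :=
          mul_le_mul_of_nonneg_right (hℓ m) (by positivity)
      _ ≤ (c₁ * Real.exp (-c₂ * N)) * (2 * (C * Real.exp (c₂ / 2 * N)) / δ₁) := by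
          gcongr
          exact hC N (le_trans zero_le_one hN1)
      _ = Sf m := by
          rw [hSf]
          simp only [← hNdef]
          rw [show -(c₂ / 2) * N = -c₂ * N + c₂ / 2 * N by ring, Real.exp_add]
          field_simp
  have hnorm_sum : Summable (fun x : ↥s0ᶜ => ‖F ↑x‖) :=
    Summable.of_nonneg_of_le (fun x => norm_nonneg _) hnormF (hSf_sum.subtype _)
  have hRle : ‖∑' x : ↥s0ᶜ, F ↑x‖ ≤ S := by
    calc ‖∑' x : ↥s0ᶜ, F ↑x‖ ≤ ∑' x : ↥s0ᶜ, ‖F ↑x‖ := norm_tsum_le_tsum_norm hnorm_sum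
      _ ≤ ∑' x : ↥s0ᶜ, Sf ↑x := Summable.tsum_le_tsum hnormF hnorm_sum (hSf_sum.subtype _)
      _ ≤ S := by
          have h := hSf_sum.tsum_subtype_add_tsum_subtype_compl s0
          have h0 : 0 ≤ ∑' x : ↥s0, Sf ↑x := tsum_nonneg fun x => hSf_nonneg _
          rw [hS]
          linarith
  have htne : (t : ℂ) ≠ 0 := by exact_mod_cast htpos.ne'
  rw [hIval, ← hsplit, h1]
  have heq : 1 / (t : ℂ) * (((t - a : ℝ) : ℂ) * HH + ∑' x : ↥s0ᶜ, F ↑x) - HH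
      = (-(a : ℂ) * HH + ∑' x : ↥s0ᶜ, F ↑x) / (t : ℂ) := by
    push_cast
    field_simp
    ring
  rw [heq, norm_div, Complex.norm_real, Real.norm_eq_abs, abs_of_pos htpos]
  gcongr
  calc ‖-(a : ℂ) * HH + ∑' x : ↥s0ᶜ, F ↑x‖
      ≤ ‖-(a : ℂ) * HH‖ + ‖∑' x : ↥s0ᶜ, F ↑x‖ :=
        norm_add_le _ _
    _ = |a| * ‖HH‖ + ‖∑' x : ↥s0ᶜ, F ↑x‖ := by
        rw [norm_mul, norm_neg, Complex.norm_real, Real.norm_eq_abs]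
    _ ≤ |a| * ‖HH‖ + S + 1 := by linarith
end

section
/- Let g ≥ 1 and let Ω ∈ ℝ^g be such that Ω₁, …, Ω_g are rationally independent. Let H : ℝ^g → ℝ be continuous and ℤ^g-periodic, i.e., H(x + m) = H(x) for all x ∈ ℝ^g and m ∈ ℤ^g. Then for every x ∈ ℝ^g, lim_{T→+∞} (1/T) ∫_0^T H(tΩ + x) dt = ∫_{[0,1]^g} H(y) dy. -/
open BigOperators MeasureTheory Complex Filter Set Pointwise

noncomputable section BirkhoffAux

local instance factOneLtPos : Fact ((0:ℝ) < 1) := ⟨zero_lt_one⟩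

abbrev BirkTorus (g : ℕ) := Fin g → AddCircle (1 : ℝ)

def birkQ (g : ℕ) : (Fin g → ℝ) → BirkTorus g :=
  Pi.map fun _ => (QuotientAddGroup.mk : ℝ → AddCircle (1:ℝ))

lemma birkQ_continuous (g : ℕ) : Continuous (birkQ g) :=
  continuous_pi fun i => Continuous.comp continuous_quotient_mk' (continuous_apply i)

lemma birkQ_isOpenQuotientMap (g : ℕ) : IsOpenQuotientMap (birkQ g) :=
  IsOpenQuotientMap.piMap fun _ => QuotientAddGroup.isOpenQuotientMap_mk

/-- representative in `[0,1)^g` -/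
def birkRep {g : ℕ} (z : BirkTorus g) : Fin g → ℝ :=
  fun i => (AddCircle.equivIco 1 0 (z i) : ℝ)

lemma birkRep_birkQ {g : ℕ} (y : Fin g → ℝ) :
    birkRep (birkQ g y) = fun i => Int.fract (y i) := by
  funext i
  show ((AddCircle.equivIco 1 0 (QuotientAddGroup.mk (y i))) : ℝ) = Int.fract (y i)
  rw [AddCircle.coe_equivIco_mk_apply]
  simp

lemma birkQ_birkRep {g : ℕ} (z : BirkTorus g) : birkQ g (birkRep z) = z := by
  funext i
  show ((AddCircle.equivIco 1 0 (z i) : ℝ) : AddCircle (1:ℝ)) = z i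
  exact (AddCircle.equivIco 1 0).symm_apply_apply (z i)

lemma birk_descent_eq {g : ℕ} {f : (Fin g → ℝ) → ℂ}
    (hper : ∀ (y : Fin g → ℝ) (m : Fin g → ℤ), f (y + fun i => (m i : ℝ)) = f y)
    (y : Fin g → ℝ) : f (birkRep (birkQ g y)) = f y := by
  rw [birkRep_birkQ]
  have : (fun i => Int.fract (y i)) = y + fun i => ((-⌊y i⌋ : ℤ) : ℝ) := by
    funext i
    simp only [Pi.add_apply, Int.cast_neg]
    rw [Int.fract]; ring
  rw [this, hper]

/-- the character `z ↦ ∏ i, e^{2πi n i z i}` on the torus. -/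
def birkChar {g : ℕ} (n : Fin g → ℤ) : C(BirkTorus g, ℂ) where
  toFun := fun z => ∏ i, (AddCircle.toCircle ((n i) • z i) : ℂ)
  continuous_toFun := by
    apply continuous_finset_prod
    intro i _
    exact continuous_induced_dom.comp
      ((AddCircle.continuous_toCircle).comp ((continuous_zsmul (n i)).comp (continuous_apply i)))

lemma birkChar_apply_birkQ {g : ℕ} (n : Fin g → ℤ) (y : Fin g → ℝ) :
    birkChar n (birkQ g y) =
      Complex.exp ((2 * Real.pi * ∑ i, (n i : ℝ) * y i : ℝ) * Complex.I) := by
  have h : ∀ i, ((AddCircle.toCircle ((n i) • (birkQ g y i))) : ℂ)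
      = Complex.exp ((2 * Real.pi * ((n i : ℝ) * y i) : ℝ) * Complex.I) := by
    intro i
    have h1 : (n i) • (birkQ g y i) = ((((n i : ℝ)) * y i : ℝ) : AddCircle (1:ℝ)) := by
      show (n i) • (QuotientAddGroup.mk (y i)) = _
      rw [← QuotientAddGroup.mk_zsmul]
      norm_cast
      rw [zsmul_eq_mul]
    rw [h1, AddCircle.toCircle_apply_mk, Circle.coe_exp]
    push_cast
    ring_nf
  show (∏ i, ((AddCircle.toCircle ((n i) • (birkQ g y i))) : ℂ)) = _
  simp_rw [h, ← Complex.exp_sum]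
  congr 1
  push_cast
  rw [Finset.mul_sum, Finset.sum_mul]

lemma birkChar_mul {g : ℕ} (n m : Fin g → ℤ) :
    birkChar n * birkChar m = birkChar (n + m) := by
  ext z
  simp only [ContinuousMap.mul_apply, birkChar, ContinuousMap.coe_mk]
  rw [← Finset.prod_mul_distrib]
  refine Finset.prod_congr rfl fun i _ => ?_
  rw [← Circle.coe_mul, ← AddCircle.toCircle_add, Pi.add_apply, add_zsmul]

lemma birkChar_zero {g : ℕ} : birkChar (0 : Fin g → ℤ) = 1 := by
  ext z
  simp [birkChar, zero_zsmul]

lemma birkChar_star {g : ℕ} (n : Fin g → ℤ) :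
    star (birkChar n) = birkChar (-n) := by
  ext z
  simp only [ContinuousMap.star_apply, birkChar, ContinuousMap.coe_mk, RCLike.star_def, map_prod]
  refine Finset.prod_congr rfl fun i _ => ?_
  rw [← Circle.coe_inv_eq_conj]
  congr 1
  rw [inv_eq_of_mul_eq_one_left ?_]
  rw [Pi.neg_apply, neg_zsmul, ← AddCircle.toCircle_add, neg_add_cancel, AddCircle.toCircle_zero]

def birkAlg (g : ℕ) : StarSubalgebra ℂ C(BirkTorus g, ℂ) where
  toSubalgebra := Submodule.toSubalgebra (Submodule.span ℂ (Set.range (birkChar (g := g))))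
    (by rw [← birkChar_zero]; exact Submodule.subset_span ⟨0, rfl⟩)
    (by
      intro a b ha hb
      have h := Submodule.mul_mem_mul ha hb
      rw [Submodule.span_mul_span] at h
      have hsub : Set.range (birkChar (g := g)) * Set.range (birkChar (g := g))
          ⊆ Set.range (birkChar (g := g)) := by
        rw [Set.mul_subset_iff]
        rintro _ ⟨n, rfl⟩ _ ⟨m, rfl⟩
        exact ⟨n + m, (birkChar_mul n m).symm⟩
      exact Submodule.span_le.mpr (hsub.trans Submodule.subset_span) h)
  star_mem' := fun {a} ha => by
    refine Submodule.span_induction ?_ ?_ ?_ ?_ ha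
    · rintro _ ⟨n, rfl⟩
      rw [birkChar_star]
      exact Submodule.subset_span ⟨-n, rfl⟩
    · rw [star_zero]; exact Submodule.zero_mem _
    · intro p q _ _ hp hq
      rw [star_add]; exact Submodule.add_mem _ hp hq
    · intro c p _ hp
      rw [star_smul]; exact Submodule.smul_mem _ _ hp

lemma birkAlg_coe (g : ℕ) :
    (birkAlg g : Set C(BirkTorus g, ℂ))
      = (Submodule.span ℂ (Set.range (birkChar (g := g))) : Set C(BirkTorus g, ℂ)) := rfl

lemma birkAlg_separatesPoints (g : ℕ) : (birkAlg g).SeparatesPoints := by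
  intro z w hzw
  obtain ⟨i, hi⟩ := Function.ne_iff.mp hzw
  refine ⟨_, ⟨birkChar (Pi.single i 1), Submodule.subset_span ⟨_, rfl⟩, rfl⟩, ?_⟩
  have key : ∀ u : BirkTorus g, birkChar (Pi.single i 1) u = (AddCircle.toCircle (u i) : ℂ) := by
    intro u
    show (∏ j, ((AddCircle.toCircle ((Pi.single i 1 j) • u j)) : ℂ)) = _
    rw [Finset.prod_eq_single i]
    · rw [Pi.single_eq_same, one_zsmul]
    · intro j _ hj
      rw [Pi.single_eq_of_ne hj, zero_zsmul, AddCircle.toCircle_zero, Circle.coe_one]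
    · exact fun h => absurd (Finset.mem_univ i) h
  show birkChar (Pi.single i 1) z ≠ birkChar (Pi.single i 1) w
  rw [key, key]
  intro h
  exact hi (AddCircle.injective_toCircle one_ne_zero (Subtype.coe_injective h))

lemma birk_mem_closure_span (g : ℕ) (f : C(BirkTorus g, ℂ)) :
    f ∈ closure ((Submodule.span ℂ (Set.range (birkChar (g := g))) : Set C(BirkTorus g, ℂ))) := by
  have h := ContinuousMap.starSubalgebra_topologicalClosure_eq_top_of_separatesPoints
    (birkAlg g) (birkAlg_separatesPoints g)
  have : f ∈ (birkAlg g).topologicalClosure := h ▸ trivial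
  exact this

section Flow
variable {g : ℕ} (Ω x : Fin g → ℝ)

def sAvg (f : C(BirkTorus g, ℂ)) : ℂ := ∫ y in Icc (0 : Fin g → ℝ) 1, f (birkQ g y)

def tAvg (f : C(BirkTorus g, ℂ)) (T : ℝ) : ℂ :=
  (1 / (T:ℂ)) * ∫ t in (0:ℝ)..T, f (birkQ g (t • Ω + x))

def birkP (f : C(BirkTorus g, ℂ)) : Prop := Tendsto (tAvg Ω x f) atTop (nhds (sAvg f))

lemma line_continuous (f : C(BirkTorus g, ℂ)) :
    Continuous (fun t : ℝ => f (birkQ g (t • Ω + x))) :=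
  f.continuous.comp <| (birkQ_continuous g).comp
    ((continuous_id.smul continuous_const).add continuous_const)

lemma line_intervalIntegrable (f : C(BirkTorus g, ℂ)) (T : ℝ) :
    IntervalIntegrable (fun t : ℝ => f (birkQ g (t • Ω + x))) volume 0 T :=
  (line_continuous Ω x f).intervalIntegrable _ _

lemma cube_integrableOn (f : C(BirkTorus g, ℂ)) :
    IntegrableOn (fun y => f (birkQ g y)) (Icc (0 : Fin g → ℝ) 1) volume :=
  (f.continuous.comp (birkQ_continuous g)).continuousOn.integrableOn_compact isCompact_Icc

lemma cube_volume : (volume (Icc (0 : Fin g → ℝ) 1)).toReal = 1 := by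
  rw [Real.volume_Icc_pi_toReal zero_le_one]
  simp

lemma cube_volume_lt_top : volume (Icc (0 : Fin g → ℝ) 1) < ⊤ :=
  isCompact_Icc.measure_lt_top

def birkMod : Submodule ℂ C(BirkTorus g, ℂ) where
  carrier := {f | birkP Ω x f}
  zero_mem' := by
    have h1 : tAvg Ω x (0 : C(BirkTorus g, ℂ)) = fun _ => 0 := by
      funext T; simp [tAvg]
    have h2 : sAvg (0 : C(BirkTorus g, ℂ)) = 0 := by simp [sAvg]
    show Tendsto _ _ _
    rw [h1, h2]
    exact tendsto_const_nhds
  add_mem' := by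
    intro p q hp hq
    have h1 : tAvg Ω x (p + q) = fun T => tAvg Ω x p T + tAvg Ω x q T := by
      funext T
      simp only [tAvg, ContinuousMap.add_apply]
      rw [intervalIntegral.integral_add (line_intervalIntegrable Ω x p T)
        (line_intervalIntegrable Ω x q T), mul_add]
    have h2 : sAvg (p + q) = sAvg p + sAvg q := by
      simp only [sAvg, ContinuousMap.add_apply]
      rw [integral_add (cube_integrableOn p) (cube_integrableOn q)]
    show Tendsto _ _ _
    rw [h1, h2]
    exact Tendsto.add hp hq
  smul_mem' := by
    intro c p hp
    have h1 : tAvg Ω x (c • p) = fun T => c • tAvg Ω x p T := by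
      funext T
      simp only [tAvg, ContinuousMap.smul_apply]
      rw [intervalIntegral.integral_smul, smul_eq_mul, smul_eq_mul]
      ring
    have h2 : sAvg (c • p) = c • sAvg p := by
      simp only [sAvg, ContinuousMap.smul_apply]
      rw [integral_smul]
    show Tendsto _ _ _
    rw [h1, h2]
    exact Tendsto.const_smul hp c

lemma birkMod_isClosed : IsClosed {f : C(BirkTorus g, ℂ) | birkP Ω x f} := by
  refine isClosed_of_closure_subset ?_
  intro f hf
  show Tendsto _ _ _
  rw [Metric.tendsto_nhds]
  intro ε hε
  obtain ⟨p, hpG, hfp⟩ := Metric.mem_closure_iff.mp hf (ε/4) (by linarith)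
  have hpw : ∀ z, ‖f z - p z‖ ≤ ε/4 := by
    intro z
    calc ‖f z - p z‖ = ‖(f - p) z‖ := by rw [ContinuousMap.sub_apply]
    _ ≤ ‖f - p‖ := ContinuousMap.norm_coe_le_norm _ z
    _ ≤ ε/4 := by rw [← dist_eq_norm]; exact le_of_lt hfp
  have hB2 : dist (sAvg f) (sAvg p) ≤ ε/4 := by
    rw [dist_eq_norm]
    have : sAvg f - sAvg p = ∫ y in Icc (0 : Fin g → ℝ) 1, (f (birkQ g y) - p (birkQ g y)) := by
      rw [integral_sub (cube_integrableOn f) (cube_integrableOn p)]; rfl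
    rw [this]
    calc ‖∫ y in Icc (0 : Fin g → ℝ) 1, (f (birkQ g y) - p (birkQ g y))‖
        ≤ (ε/4) * (volume (Icc (0 : Fin g → ℝ) 1)).toReal := by
          exact norm_setIntegral_le_of_norm_le_const cube_volume_lt_top
            (fun y _ => hpw _)
    _ = ε/4 := by rw [cube_volume]; ring
  have hev := (Metric.tendsto_nhds.mp hpG) (ε/4) (by linarith)
  filter_upwards [hev, eventually_ge_atTop (1:ℝ)] with T hT1 hT2
  have hTpos : (0:ℝ) < T := lt_of_lt_of_le one_pos hT2
  have hB1 : dist (tAvg Ω x f T) (tAvg Ω x p T) ≤ ε/4 := by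
    rw [dist_eq_norm]
    have heq : tAvg Ω x f T - tAvg Ω x p T
        = (1/(T:ℂ)) * ∫ t in (0:ℝ)..T, (f (birkQ g (t • Ω + x)) - p (birkQ g (t • Ω + x))) := by
      rw [intervalIntegral.integral_sub (line_intervalIntegrable Ω x f T)
        (line_intervalIntegrable Ω x p T)]
      simp only [tAvg]
      ring
    rw [heq, norm_mul]
    have h3 : ‖∫ t in (0:ℝ)..T, (f (birkQ g (t • Ω + x)) - p (birkQ g (t • Ω + x)))‖
        ≤ (ε/4) * |T - 0| := intervalIntegral.norm_integral_le_of_norm_le_const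
          (fun t _ => hpw _)
    have h4 : ‖(1/(T:ℂ))‖ = 1/T := by
      rw [norm_div, norm_one, Complex.norm_real, Real.norm_eq_abs, abs_of_pos hTpos]
    calc ‖(1/(T:ℂ))‖ * ‖∫ t in (0:ℝ)..T, (f (birkQ g (t • Ω + x)) - p (birkQ g (t • Ω + x)))‖
        ≤ (1/T) * ((ε/4) * |T - 0|) := by
          rw [h4]
          exact mul_le_mul_of_nonneg_left h3 (by positivity)
    _ = ε/4 := by
          rw [sub_zero, abs_of_pos hTpos]
          field_simp
  calc dist (tAvg Ω x f T) (sAvg f)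
      ≤ dist (tAvg Ω x f T) (tAvg Ω x p T) + dist (tAvg Ω x p T) (sAvg p)
        + dist (sAvg p) (sAvg f) := dist_triangle4 _ _ _ _
  _ < ε := by
      rw [dist_comm (sAvg p)] at *
      linarith

end Flow
section FlowChar
variable {g : ℕ} (Ω x : Fin g → ℝ)

lemma birkP_char_zero : birkP Ω x (birkChar (0 : Fin g → ℤ)) := by
  rw [birkP, birkChar_zero]
  have h2 : sAvg (1 : C(BirkTorus g, ℂ)) = 1 := by
    simp only [sAvg, ContinuousMap.one_apply]
    rw [setIntegral_const, measureReal_def, cube_volume]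
    simp
  rw [h2]
  have h1 : ∀ᶠ T in atTop, tAvg Ω x (1 : C(BirkTorus g, ℂ)) T = 1 := by
    filter_upwards [eventually_ge_atTop (1:ℝ)] with T hT
    have hT0 : (T:ℂ) ≠ 0 := by
      exact_mod_cast ne_of_gt (lt_of_lt_of_le one_pos hT)
    simp only [tAvg, ContinuousMap.one_apply, intervalIntegral.integral_const, sub_zero]
    rw [Complex.real_smul, mul_one]
    field_simp
  exact Tendsto.congr' (Filter.EventuallyEq.symm h1) tendsto_const_nhds

lemma birkP_char_ne (n : Fin g → ℤ) (hn : n ≠ 0)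
    (hΩn : (∑ i, (n i : ℝ) * Ω i) ≠ 0) : birkP Ω x (birkChar n) := by
  set a : ℝ := 2 * Real.pi * ∑ i, (n i : ℝ) * Ω i with ha_def
  set b : ℝ := 2 * Real.pi * ∑ i, (n i : ℝ) * x i with hb_def
  have ha0 : a ≠ 0 := mul_ne_zero (by positivity) hΩn
  have hc : ((a:ℂ)) * Complex.I ≠ 0 :=
    mul_ne_zero (by exact_mod_cast ha0) Complex.I_ne_zero
  -- space average is zero
  have hs : sAvg (birkChar n) = 0 := by
    obtain ⟨i0, hi0⟩ := Function.ne_iff.mp hn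
    have hF : ∀ y : Fin g → ℝ, birkChar n (birkQ g y)
        = ∏ i, Complex.exp ((2 * Real.pi * (n i : ℝ) * Complex.I) * y i) := by
      intro y
      rw [birkChar_apply_birkQ, ← Complex.exp_sum]
      congr 1
      push_cast
      rw [Finset.mul_sum, Finset.sum_mul]
      refine Finset.sum_congr rfl fun i _ => by ring
    have hind : ∀ y : Fin g → ℝ,
        Set.indicator (Icc (0 : Fin g → ℝ) 1)
          (fun y => ∏ i, Complex.exp ((2 * Real.pi * (n i : ℝ) * Complex.I) * y i)) y
        = ∏ i, Set.indicator (Icc (0:ℝ) 1)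
            (fun t => Complex.exp ((2 * Real.pi * (n i : ℝ) * Complex.I) * t)) (y i) := by
      intro y
      by_cases hy : y ∈ Icc (0 : Fin g → ℝ) 1
      · rw [Set.indicator_of_mem hy]
        refine (Finset.prod_congr rfl fun i _ => ?_).symm
        have : y i ∈ Icc (0:ℝ) 1 := ⟨hy.1 i, hy.2 i⟩
        rw [Set.indicator_of_mem this]
      · rw [Set.indicator_of_notMem hy]
        have : ∃ i, y i ∉ Icc (0:ℝ) 1 := by
          by_contra hcon
          push_neg at hcon
          exact hy ⟨fun i => (hcon i).1, fun i => (hcon i).2⟩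
        obtain ⟨i, hi⟩ := this
        refine (Finset.prod_eq_zero (Finset.mem_univ i) ?_).symm
        rw [Set.indicator_of_notMem hi]
    have hfac : ∫ t in Icc (0:ℝ) 1,
        Complex.exp ((2 * Real.pi * (n i0 : ℝ) * Complex.I) * t) = 0 := by
      rw [integral_Icc_eq_integral_Ioc, ← intervalIntegral.integral_of_le zero_le_one]
      have hci0 : (2 * (Real.pi:ℂ) * (n i0 : ℂ) * Complex.I) ≠ 0 := by
        refine mul_ne_zero (mul_ne_zero (mul_ne_zero two_ne_zero ?_) ?_) Complex.I_ne_zero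
        · exact_mod_cast Real.pi_ne_zero
        · exact_mod_cast hi0
      have : ∀ t : ℝ, ((2 * Real.pi * (n i0 : ℝ) * Complex.I) : ℂ) * t
          = (2 * (Real.pi:ℂ) * (n i0 : ℂ) * Complex.I) * t := by
        intro t; push_cast; ring
      simp_rw [this]
      rw [integral_exp_mul_complex hci0]
      have h1 : (2 * (Real.pi:ℂ) * (n i0 : ℂ) * Complex.I) * (1:ℝ)
          = (n i0 : ℂ) * (2 * (Real.pi:ℂ) * Complex.I) := by push_cast; ring
      rw [h1, Complex.exp_int_mul_two_pi_mul_I]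
      simp
    calc sAvg (birkChar n)
        = ∫ y in Icc (0 : Fin g → ℝ) 1,
            ∏ i, Complex.exp ((2 * Real.pi * (n i : ℝ) * Complex.I) * y i) := by
          simp only [sAvg]
          exact integral_congr_ae (Filter.EventuallyEq.of_eq (funext fun y => hF y))
    _ = ∫ y : Fin g → ℝ, ∏ i, Set.indicator (Icc (0:ℝ) 1)
            (fun t => Complex.exp ((2 * Real.pi * (n i : ℝ) * Complex.I) * t)) (y i) := by
          rw [← integral_indicator measurableSet_Icc]
          exact integral_congr_ae (Filter.EventuallyEq.of_eq (funext hind))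
    _ = ∏ i, ∫ t : ℝ, Set.indicator (Icc (0:ℝ) 1)
            (fun t => Complex.exp ((2 * Real.pi * (n i : ℝ) * Complex.I) * t)) t :=
          MeasureTheory.integral_fintype_prod_volume_eq_prod _
    _ = 0 := by
          refine Finset.prod_eq_zero (Finset.mem_univ i0) ?_
          rw [integral_indicator measurableSet_Icc]
          exact hfac
  rw [birkP, hs]
  -- time average
  have hval : ∀ t : ℝ, birkChar n (birkQ g (t • Ω + x))
      = Complex.exp ((b:ℝ) * Complex.I) * Complex.exp (((a:ℝ) * Complex.I) * t) := by
    intro t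
    rw [birkChar_apply_birkQ, ← Complex.exp_add]
    congr 1
    have hsum : ∑ i, (n i:ℝ) * ((t • Ω + x) i)
        = (∑ i, (n i:ℝ) * Ω i) * t + ∑ i, (n i:ℝ) * x i := by
      simp only [Pi.add_apply, Pi.smul_apply, smul_eq_mul]
      rw [Finset.sum_mul, ← Finset.sum_add_distrib]
      exact Finset.sum_congr rfl fun i _ => by ring
    rw [hsum, ha_def, hb_def]
    push_cast
    ring
  have hint : ∀ T : ℝ, tAvg Ω x (birkChar n) T = (1/(T:ℂ)) * (Complex.exp ((b:ℝ) * Complex.I)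
      * ((Complex.exp (((a:ℝ) * Complex.I) * T) - 1) / ((a:ℝ) * Complex.I))) := by
    intro T
    simp only [tAvg]
    congr 1
    simp_rw [hval]
    rw [intervalIntegral.integral_const_mul, integral_exp_mul_complex hc]
    rw [Complex.ofReal_zero, mul_zero, Complex.exp_zero]
  have hbd : ∀ᶠ T : ℝ in atTop, ‖tAvg Ω x (birkChar n) T‖ ≤ 2 / |a| * T⁻¹ := by
    filter_upwards [eventually_ge_atTop (1:ℝ)] with T hT
    rw [hint]
    have hTpos : (0:ℝ) < T := lt_of_lt_of_le one_pos hT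
    have h2 : ‖Complex.exp ((b:ℝ) * Complex.I)‖ = 1 := by
      rw [Complex.norm_exp_ofReal_mul_I]
    have h3 : ‖((a:ℂ) * Complex.I)‖ = |a| := by
      rw [norm_mul, Complex.norm_real, Complex.norm_I, mul_one, Real.norm_eq_abs]
    have h4 : ‖Complex.exp (((a:ℝ) * Complex.I) * T) - 1‖ ≤ 2 := by
      refine (norm_sub_le _ _).trans ?_
      have he : ((a:ℂ) * Complex.I) * (T:ℂ) = ((a * T : ℝ) : ℂ) * Complex.I := by
        push_cast; ring
      rw [he, norm_one, Complex.norm_exp_ofReal_mul_I]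
      norm_num
    rw [norm_mul, norm_mul, norm_div, norm_div, norm_one, h2, h3, one_mul,
      Complex.norm_real, Real.norm_eq_abs, abs_of_pos hTpos]
    calc 1/T * (‖Complex.exp (((a:ℝ) * Complex.I) * T) - 1‖ / |a|)
        ≤ 1/T * (2 / |a|) := by gcongr
    _ = 2 / |a| * T⁻¹ := by ring
  have htend : Tendsto (fun T : ℝ => 2 / |a| * T⁻¹) atTop (nhds 0) := by
    have h := tendsto_inv_atTop_zero.const_mul (2/|a|)
    simpa using h
  exact squeeze_zero_norm' hbd htend
end FlowChar

end BirkhoffAux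

/-- Birkhoff ergodic theorem for linear flows on the torus: if `Ω₁, …, Ω_g` are
rationally independent and `H : ℝ^g → ℝ` is continuous and `ℤ^g`-periodic, then for
every `x ∈ ℝ^g` the time average `(1/T)∫_0^T H(tΩ + x) dt` converges to the space
average `∫_{[0,1]^g} H(y) dy` as `T → +∞`. -/
theorem time_average_eq_space_average
    (g : ℕ) (hg : 1 ≤ g) (Ω : Fin g → ℝ)
    (hΩ : ∀ n : Fin g → ℤ, (∑ j, (n j : ℝ) * Ω j) = 0 → n = 0)
    (H : (Fin g → ℝ) → ℝ) (hH : Continuous H)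
    (hper : ∀ (x : Fin g → ℝ) (m : Fin g → ℤ), H (x + fun i => (m i : ℝ)) = H x)
    (x : Fin g → ℝ) :
    Filter.Tendsto (fun T : ℝ => (1 / T) * ∫ t in (0:ℝ)..T, H (t • Ω + x))
      Filter.atTop (nhds (∫ y in Set.Icc (0 : Fin g → ℝ) 1, H y)) := by
  classical
  set Hc : (Fin g → ℝ) → ℂ := fun y => (H y : ℂ) with hHc
  have hHcont : Continuous Hc := Complex.continuous_ofReal.comp hH
  have hperC : ∀ (y : Fin g → ℝ) (m : Fin g → ℤ), Hc (y + fun i => (m i : ℝ)) = Hc y := by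
    intro y m
    simp only [Hc]
    rw [hper y m]
  have hdesc : ∀ y : Fin g → ℝ, Hc (birkRep (birkQ g y)) = Hc y :=
    fun y => birk_descent_eq hperC y
  have hcont : Continuous (fun z : BirkTorus g => Hc (birkRep z)) := by
    rw [(birkQ_isOpenQuotientMap g).isQuotientMap.continuous_iff]
    have : ((fun z : BirkTorus g => Hc (birkRep z)) ∘ birkQ g) = Hc := funext hdesc
    rw [this]
    exact hHcont
  set fbar : C(BirkTorus g, ℂ) := ⟨fun z => Hc (birkRep z), hcont⟩ with hfbar
  have hfq : ∀ y, fbar (birkQ g y) = Hc y := hdesc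
  -- fbar satisfies the convergence property
  have hspan : (Submodule.span ℂ (Set.range (birkChar (g := g))) : Set C(BirkTorus g, ℂ))
      ⊆ {f | birkP Ω x f} := by
    have hle : Submodule.span ℂ (Set.range (birkChar (g := g))) ≤ birkMod Ω x := by
      rw [Submodule.span_le]
      rintro _ ⟨n, rfl⟩
      by_cases hn : n = 0
      · subst hn
        exact birkP_char_zero Ω x
      · exact birkP_char_ne Ω x n hn (fun h0 => hn (hΩ n h0))
    exact hle
  have hP : birkP Ω x fbar := by
    have hc1 : fbar ∈ closure ((Submodule.span ℂ (Set.range (birkChar (g := g)))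
        : Set C(BirkTorus g, ℂ))) := birk_mem_closure_span g fbar
    have := (IsClosed.closure_subset_iff (birkMod_isClosed Ω x)).mpr hspan hc1
    exact this
  -- translate back to the real statement
  have h1 : tAvg Ω x fbar
      = fun T : ℝ => (((1 / T) * ∫ t in (0:ℝ)..T, H (t • Ω + x) : ℝ) : ℂ) := by
    funext T
    simp only [tAvg]
    have : (fun t : ℝ => fbar (birkQ g (t • Ω + x))) = fun t : ℝ => ((H (t • Ω + x) : ℝ) : ℂ) := by
      funext t; rw [hfq]
    rw [this, intervalIntegral.integral_ofReal]
    push_cast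
    ring
  have h2 : sAvg fbar = ((∫ y in Set.Icc (0 : Fin g → ℝ) 1, H y : ℝ) : ℂ) := by
    simp only [sAvg]
    have : (fun y : Fin g → ℝ => fbar (birkQ g y)) = fun y => ((H y : ℝ) : ℂ) := funext hfq
    rw [this]
    exact integral_ofReal
  rw [birkP, h1, h2] at hP
  exact Filter.tendsto_ofReal_iff.mp hP
end

section
/- Let g ≥ 1, Ω ∈ ℝ^g, and c ∈ ℝ^g. The following are equivalent: (i) the orbit {tΩ + c : t ∈ (0, +∞)} is dense in ℝ^g modulo ℤ^g, i.e., for every x ∈ ℝ^g and every ε > 0 there exist t > 0 and m ∈ ℤ^g with ‖tΩ + c − x − m‖ < ε; (ii) Ω₁, …, Ω_g are rationally independent. -/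
open BigOperators

private lemma fract_diff_close {K : ℕ} (hK : 0 < K) {x y : ℝ}
    (h : (⌊(K : ℝ) * Int.fract x⌋).toNat = (⌊(K : ℝ) * Int.fract y⌋).toNat) :
    |x - y - ((⌊x⌋ - ⌊y⌋ : ℤ) : ℝ)| < 1 / K := by
  have hKR : (0:ℝ) < K := by exact_mod_cast hK
  have hx0 : (0:ℝ) ≤ (K : ℝ) * Int.fract x :=
    mul_nonneg hKR.le (Int.fract_nonneg x)
  have hy0 : (0:ℝ) ≤ (K : ℝ) * Int.fract y :=
    mul_nonneg hKR.le (Int.fract_nonneg y)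
  have h1 : (0:ℤ) ≤ ⌊(K : ℝ) * Int.fract x⌋ := Int.le_floor.mpr (by exact_mod_cast hx0)
  have h2 : (0:ℤ) ≤ ⌊(K : ℝ) * Int.fract y⌋ := Int.le_floor.mpr (by exact_mod_cast hy0)
  have hfl : ⌊(K : ℝ) * Int.fract x⌋ = ⌊(K : ℝ) * Int.fract y⌋ := by omega
  have hdiff : |(K : ℝ) * Int.fract x - (K : ℝ) * Int.fract y| < 1 := by
    have hx1 := Int.floor_le ((K : ℝ) * Int.fract x)
    have hx2 := Int.lt_floor_add_one ((K : ℝ) * Int.fract x)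
    have hy1 := Int.floor_le ((K : ℝ) * Int.fract y)
    have hy2 := Int.lt_floor_add_one ((K : ℝ) * Int.fract y)
    rw [hfl] at hx1 hx2
    rw [abs_lt]; constructor <;> linarith
  have key : x - y - ((⌊x⌋ - ⌊y⌋ : ℤ) : ℝ) = Int.fract x - Int.fract y := by
    rw [Int.fract, Int.fract]; push_cast; ring
  rw [key]
  have : |Int.fract x - Int.fract y| * K < 1 := by
    calc |Int.fract x - Int.fract y| * K = |(K:ℝ) * Int.fract x - (K:ℝ) * Int.fract y| := by
          rw [← mul_sub, abs_mul, abs_of_nonneg hKR.le, mul_comm]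
      _ < 1 := hdiff
  exact (lt_div_iff₀ hKR).mpr this

private lemma recurrence (g : ℕ) (Ω : Fin g → ℝ) {ε : ℝ} (hε : 0 < ε) (M : ℝ) :
    ∃ T : ℝ, M < T ∧ ∃ p : Fin g → ℤ, ∀ i, |T * Ω i - p i| < ε := by
  set K : ℕ := ⌊ε⁻¹⌋₊ + 1 with hKdef
  have hK : 0 < K := Nat.succ_pos _
  have hKR : (0:ℝ) < K := by exact_mod_cast hK
  have h1 : ε⁻¹ < (K:ℝ) := by
    have := Nat.lt_floor_add_one ε⁻¹
    push_cast
    exact_mod_cast this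
  have hKε : 1 / (K:ℝ) < ε := by
    rw [div_lt_iff₀ hKR]
    have h2 : ε * ε⁻¹ < ε * K := by
      exact mul_lt_mul_of_pos_left h1 hε
    rwa [mul_inv_cancel₀ hε.ne'] at h2
  set s : ℝ := max M 0 + 1 with hsdef
  have hs : 0 < s := by positivity
  have hMs : M < s := by
    have : M ≤ max M 0 := le_max_left _ _
    linarith
  have hbound : ∀ (z : ℝ), (⌊(K:ℝ) * Int.fract z⌋).toNat < K := by
    intro z
    have : ⌊(K:ℝ) * Int.fract z⌋ < (K:ℤ) := by
      apply Int.floor_lt.mpr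
      calc (K:ℝ) * Int.fract z < (K:ℝ) * 1 :=
            mul_lt_mul_of_pos_left (Int.fract_lt_one z) hKR
        _ = ((K:ℤ):ℝ) := by push_cast; ring
    omega
  set f : Fin (K ^ g + 1) → (Fin g → Fin K) :=
    fun j i => ⟨(⌊(K:ℝ) * Int.fract ((j : ℕ) * s * Ω i)⌋).toNat, hbound _⟩ with hfdef
  have hcard : Fintype.card (Fin g → Fin K) < Fintype.card (Fin (K ^ g + 1)) := by
    simp [Fintype.card_fun]
  obtain ⟨j₁, j₂, hne, hfe⟩ := Fintype.exists_ne_map_eq_of_card_lt f hcard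
  have key : ∀ a b : Fin (K ^ g + 1), (a : ℕ) < (b : ℕ) → f a = f b →
      ∃ T : ℝ, M < T ∧ ∃ p : Fin g → ℤ, ∀ i, |T * Ω i - p i| < ε := by
    intro a b hab hfab
    refine ⟨(((b : ℕ) - (a : ℕ) : ℕ) : ℝ) * s, ?_, ?_⟩
    · have h1' : (1:ℝ) ≤ (((b : ℕ) - (a : ℕ) : ℕ) : ℝ) := by
        have : 1 ≤ (b : ℕ) - (a : ℕ) := by omega
        exact_mod_cast this
      nlinarith
    · refine ⟨fun i => ⌊(b : ℕ) * s * Ω i⌋ - ⌊(a : ℕ) * s * Ω i⌋, fun i => ?_⟩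
      have heqi : (⌊(K:ℝ) * Int.fract ((b : ℕ) * s * Ω i)⌋).toNat
          = (⌊(K:ℝ) * Int.fract ((a : ℕ) * s * Ω i)⌋).toNat := by
        have := congrFun hfab i
        simpa [hfdef, Fin.ext_iff] using this.symm
      have hcl := fract_diff_close hK heqi
      have hrw : (((b : ℕ) - (a : ℕ) : ℕ) : ℝ) * s * Ω i
          = (b : ℕ) * s * Ω i - (a : ℕ) * s * Ω i - 0 + 0 := by
        rw [Nat.cast_sub hab.le]; ring
      have : (((b : ℕ) - (a : ℕ) : ℕ) : ℝ) * s * Ω i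
            - ((⌊(b : ℕ) * s * Ω i⌋ - ⌊(a : ℕ) * s * Ω i⌋ : ℤ) : ℝ)
          = (b : ℕ) * s * Ω i - (a : ℕ) * s * Ω i
            - ((⌊(b : ℕ) * s * Ω i⌋ - ⌊(a : ℕ) * s * Ω i⌋ : ℤ) : ℝ) := by
        rw [Nat.cast_sub hab.le]; push_cast; ring
      rw [this]
      exact lt_trans hcl hKε
  rcases lt_or_gt_of_ne (fun h : (j₁ : ℕ) = (j₂ : ℕ) => hne (Fin.ext h)) with h | h
  · exact key j₁ j₂ h hfe
  · exact key j₂ j₁ h hfe.symm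

private def lineSub (g : ℕ) (H : AddSubgroup (EuclideanSpace ℝ (Fin g))) :
    Submodule ℝ (EuclideanSpace ℝ (Fin g)) where
  carrier := {v | ∀ t : ℝ, t • v ∈ H}
  add_mem' := by
    intro a b ha hb t
    rw [smul_add]; exact H.add_mem (ha t) (hb t)
  zero_mem' := by
    intro t
    rw [smul_zero]; exact H.zero_mem
  smul_mem' := by
    intro c v hv t
    rw [smul_smul]; exact hv (t * c)

private lemma lineSub_le (g : ℕ) (H : AddSubgroup (EuclideanSpace ℝ (Fin g)))
    {v : EuclideanSpace ℝ (Fin g)} (hv : v ∈ lineSub g H) : v ∈ H := by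
  simpa using hv 1

private lemma exists_isolation (g : ℕ) (H : AddSubgroup (EuclideanSpace ℝ (Fin g)))
    (hcl : IsClosed (H : Set (EuclideanSpace ℝ (Fin g)))) :
    ∃ ε : ℝ, 0 < ε ∧ ∀ x ∈ H, ‖x‖ < ε → x ∈ lineSub g H := by
  by_contra hcon
  push_neg at hcon
  have hseq : ∀ n : ℕ, ∃ x, x ∈ H ∧ ‖x‖ < 1/(n+1) ∧ x ∉ lineSub g H := by
    intro n
    obtain ⟨x, h1, h2, h3⟩ := hcon (1/(n+1)) (by positivity)
    exact ⟨x, h1, h2, h3⟩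
  choose h hH hnorm hnV using hseq
  set V := lineSub g H with hVdef
  haveI : CompleteSpace V := FiniteDimensional.complete ℝ V
  set w : ℕ → EuclideanSpace ℝ (Fin g) :=
    fun n => h n - (Submodule.orthogonalProjection V (h n) : EuclideanSpace ℝ (Fin g)) with hwdef
  have hwH : ∀ n, w n ∈ H :=
    fun n => H.sub_mem (hH n) (lineSub_le g H (Submodule.orthogonalProjection V (h n)).2)
  have hwO : ∀ n, w n ∈ Vᗮ := fun n => Submodule.sub_starProjection_mem_orthogonal (h n)
  have hwne : ∀ n, w n ≠ 0 := by
    intro n hw0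
    apply hnV n
    have hx : h n = (Submodule.orthogonalProjection V (h n) : EuclideanSpace ℝ (Fin g)) := by
      rwa [sub_eq_zero] at hw0
    rw [hx]
    exact (Submodule.orthogonalProjection V (h n)).2
  have hwnorm : ∀ n, ‖w n‖ ≤ ‖h n‖ := by
    intro n
    have hio : inner ℝ ((Submodule.orthogonalProjection V (h n) : EuclideanSpace ℝ (Fin g))) (w n) = (0:ℝ) :=
      (Submodule.mem_orthogonal V (w n)).mp (hwO n) _ (Submodule.orthogonalProjection V (h n)).2
    have hsum : h n = (Submodule.orthogonalProjection V (h n) : EuclideanSpace ℝ (Fin g)) + w n := by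
      simp only [hwdef]; abel
    have hsq : ‖h n‖^2 = ‖(Submodule.orthogonalProjection V (h n) : EuclideanSpace ℝ (Fin g))‖^2
        + 2 * inner ℝ ((Submodule.orthogonalProjection V (h n) : EuclideanSpace ℝ (Fin g))) (w n)
        + ‖w n‖^2 := by
      conv_lhs => rw [hsum]
      exact norm_add_sq_real _ _
    nlinarith [norm_nonneg (w n), norm_nonneg (h n),
      norm_nonneg ((Submodule.orthogonalProjection V (h n) : EuclideanSpace ℝ (Fin g))), hio, hsq]
  set u : ℕ → EuclideanSpace ℝ (Fin g) := fun n => ‖w n‖⁻¹ • w n with hudef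
  have hwpos : ∀ n, 0 < ‖w n‖ := fun n => norm_pos_iff.mpr (hwne n)
  have hu : ∀ n, u n ∈ Metric.sphere (0 : EuclideanSpace ℝ (Fin g)) 1 := by
    intro n
    rw [mem_sphere_zero_iff_norm, hudef, norm_smul, norm_inv, norm_norm]
    exact inv_mul_cancel₀ (hwpos n).ne'
  obtain ⟨u₀, hu₀s, φ, hφ, hconv⟩ := (isCompact_sphere (0 : EuclideanSpace ℝ (Fin g)) 1).tendsto_subseq hu
  have hu₀O : u₀ ∈ Vᗮ := by
    have hclO : IsClosed ((Vᗮ : Submodule ℝ (EuclideanSpace ℝ (Fin g))) : Set (EuclideanSpace ℝ (Fin g))) :=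
      Submodule.closed_of_finiteDimensional _
    refine hclO.mem_of_tendsto hconv (Filter.Eventually.of_forall fun k => ?_)
    exact Submodule.smul_mem _ _ (hwO (φ k))
  -- the sequence of norms tends to zero
  set r : ℕ → ℝ := fun k => ‖w (φ k)‖ with hrdef
  have hrpos : ∀ k, 0 < r k := fun k => hwpos (φ k)
  have hrle : ∀ k, r k ≤ 1 / (k + 1 : ℝ) := by
    intro k
    have h1 : r k ≤ ‖h (φ k)‖ := hwnorm (φ k)
    have h2 : ‖h (φ k)‖ < 1 / ((φ k : ℝ) + 1) := hnorm (φ k)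
    have h3 : (1 : ℝ) / ((φ k : ℝ) + 1) ≤ 1 / (k + 1 : ℝ) := by
      apply one_div_le_one_div_of_le (by positivity)
      have : (k : ℝ) ≤ (φ k : ℝ) := by exact_mod_cast hφ.le_apply
      linarith
    linarith
  have hr0 : Filter.Tendsto r Filter.atTop (nhds 0) := by
    refine squeeze_zero (fun k => (hrpos k).le) hrle ?_
    exact tendsto_one_div_add_atTop_nhds_zero_nat
  have hu₀V : u₀ ∈ V := by
    intro t
    set a : ℕ → ℝ := fun k => (⌊t / r k⌋ : ℝ) * r k with hadef
    have hz : ∀ k, a k • u (φ k) ∈ H := by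
      intro k
      have : a k • u (φ k) = (⌊t / r k⌋ : ℤ) • w (φ k) := by
        rw [hadef, hudef]
        simp only [smul_smul]
        rw [← Int.cast_smul_eq_zsmul ℝ]
        congr 1
        rw [show r k = ‖w (φ k)‖ from rfl]
        exact mul_inv_cancel_right₀ (hwpos (φ k)).ne' _
      rw [this]
      exact AddSubgroup.zsmul_mem H (hwH (φ k)) _
    have hat : Filter.Tendsto a Filter.atTop (nhds t) := by
      have hle1 : ∀ k, a k ≤ t := by
        intro k
        have := Int.floor_le (t / r k)
        calc a k ≤ (t / r k) * r k := by
              exact mul_le_mul_of_nonneg_right this (hrpos k).le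
          _ = t := div_mul_cancel₀ t (hrpos k).ne'
      have hle2 : ∀ k, t - r k ≤ a k := by
        intro k
        have h4 := Int.lt_floor_add_one (t / r k)
        have h5 : t / r k * r k < ((⌊t / r k⌋ : ℝ) + 1) * r k :=
          mul_lt_mul_of_pos_right h4 (hrpos k)
        rw [div_mul_cancel₀ t (hrpos k).ne'] at h5
        have ha : a k = (⌊t / r k⌋ : ℝ) * r k := rfl
        rw [ha]
        nlinarith [hrpos k]
      have htr : Filter.Tendsto (fun k => t - r k) Filter.atTop (nhds t) := by
        have := Filter.Tendsto.sub (tendsto_const_nhds (x := t)) hr0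
        simpa using this
      exact tendsto_of_tendsto_of_tendsto_of_le_of_le htr tendsto_const_nhds hle2 hle1
    have hzt : Filter.Tendsto (fun k => a k • u (φ k)) Filter.atTop (nhds (t • u₀)) :=
      Filter.Tendsto.smul hat hconv
    exact hcl.mem_of_tendsto hzt (Filter.Eventually.of_forall hz)
  have : u₀ = 0 := by
    rw [← inner_self_eq_zero (𝕜 := ℝ)]
    exact (Submodule.mem_orthogonal V u₀).mp hu₀O u₀ hu₀V
  rw [mem_sphere_zero_iff_norm, this, norm_zero] at hu₀s
  norm_num at hu₀s

section
variable (g : ℕ) (Ω : Fin g → ℝ)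

private noncomputable def orbitGroup : AddSubgroup (EuclideanSpace ℝ (Fin g)) where
  carrier := {v | ∃ t : ℝ, ∃ m : Fin g → ℤ, ∀ i, v i = t * Ω i + m i}
  add_mem' := by
    rintro a b ⟨t, m, ha⟩ ⟨s, l, hb⟩
    refine ⟨t + s, m + l, fun i => ?_⟩
    have h : (a + b) i = a i + b i := rfl
    have h2 : ((m + l) i : ℝ) = (m i : ℝ) + (l i : ℝ) := by rw [Pi.add_apply, Int.cast_add]
    rw [h, ha i, hb i, h2]
    ring
  zero_mem' := by
    refine ⟨0, 0, fun i => ?_⟩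
    have h : (0 : EuclideanSpace ℝ (Fin g)) i = 0 := rfl
    rw [h]
    norm_num
  neg_mem' := by
    rintro a ⟨t, m, ha⟩
    refine ⟨-t, -m, fun i => ?_⟩
    have h : (-a) i = -(a i) := rfl
    have h2 : ((-m) i : ℝ) = -(m i : ℝ) := by rw [Pi.neg_apply, Int.cast_neg]
    rw [h, ha i, h2]
    ring

end
set_option maxHeartbeats 1000000 in
private lemma dense_orbit (g : ℕ) (Ω : Fin g → ℝ)
    (hind : ∀ n : Fin g → ℤ, (∑ j, (n j : ℝ) * Ω j) = 0 → n = 0) :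
    ∀ y : EuclideanSpace ℝ (Fin g), y ∈ (orbitGroup g Ω).topologicalClosure := by
  classical
  set G := orbitGroup g Ω with hGdef
  set H := G.topologicalClosure with hHdef
  have hcl : IsClosed (H : Set (EuclideanSpace ℝ (Fin g))) :=
    AddSubgroup.isClosed_topologicalClosure G
  set V := lineSub g H with hVdef
  suffices hV : V = ⊤ by
    intro y
    have hy : y ∈ V := by rw [hV]; exact Submodule.mem_top
    exact lineSub_le g H hy
  by_contra hVne
  -- the standard basis vectors
  set bE := (EuclideanSpace.basisFun (Fin g) ℝ).toBasis with hbEdef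
  set e : Fin g → EuclideanSpace ℝ (Fin g) := fun i => bE i with hedef
  have he_apply : ∀ i j, e i j = if j = i then (1:ℝ) else 0 := by
    intro i j
    show (EuclideanSpace.basisFun (Fin g) ℝ).toBasis i j = _
    rw [OrthonormalBasis.coe_toBasis, EuclideanSpace.basisFun_apply]
    exact EuclideanSpace.single_apply i 1 j
  have heG : ∀ i, e i ∈ G := by
    intro i
    refine ⟨0, fun j => if j = i then 1 else 0, fun j => ?_⟩
    by_cases h : j = i <;> simp [he_apply, h]
  have heH : ∀ i, e i ∈ H := fun i => AddSubgroup.le_topologicalClosure G (heG i)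
  have hΩV : WithLp.toLp 2 Ω ∈ V := by
    intro t
    apply AddSubgroup.le_topologicalClosure G
    refine ⟨t, 0, fun i => ?_⟩
    have h : (t • WithLp.toLp 2 Ω : EuclideanSpace ℝ (Fin g)) i = t * Ω i := rfl
    rw [h]
    norm_num
  haveI : CompleteSpace V := FiniteDimensional.complete ℝ V
  obtain ⟨ε, hε, hiso⟩ := exists_isolation g H hcl
  set q := Submodule.orthogonalProjection Vᗮ with hqdef
  have hsubV : ∀ v : EuclideanSpace ℝ (Fin g), v - (q v : EuclideanSpace ℝ (Fin g)) ∈ V := by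
    intro v
    have := Submodule.sub_starProjection_mem_orthogonal (K := Vᗮ) v
    rwa [Submodule.orthogonal_orthogonal] at this
  -- the lattice D inside Vᗮ
  set D : Submodule ℤ ↥Vᗮ :=
    { carrier := {u | (u : EuclideanSpace ℝ (Fin g)) ∈ H}
      add_mem' := fun {a b} ha hb => by
        show ((a + b : ↥Vᗮ) : EuclideanSpace ℝ (Fin g)) ∈ H
        have h : ((a + b : ↥Vᗮ) : EuclideanSpace ℝ (Fin g)) = ↑a + ↑b := rfl
        rw [h]; exact H.add_mem ha hb
      zero_mem' := by
        show ((0 : ↥Vᗮ) : EuclideanSpace ℝ (Fin g)) ∈ H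
        have h : ((0 : ↥Vᗮ) : EuclideanSpace ℝ (Fin g)) = 0 := rfl
        rw [h]; exact H.zero_mem
      smul_mem' := fun c {x} hx => by
        show ((c • x : ↥Vᗮ) : EuclideanSpace ℝ (Fin g)) ∈ H
        have h : ((c • x : ↥Vᗮ) : EuclideanSpace ℝ (Fin g)) = c • (x : EuclideanSpace ℝ (Fin g)) :=
          AddMonoidHom.map_zsmul (Vᗮ.subtype.toAddMonoidHom) c x
        rw [h]; exact AddSubgroup.zsmul_mem H hx c } with hDdef
  have hDmem : ∀ u : ↥Vᗮ, u ∈ D ↔ (u : EuclideanSpace ℝ (Fin g)) ∈ H := fun u => Iff.rfl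
  haveI hDdisc : DiscreteTopology ↥D := by
    rw [discreteTopology_iff_isOpen_singleton]
    intro a
    have hset : {a} = (Subtype.val : ↥D → ↥Vᗮ) ⁻¹' (Metric.ball (a : ↥Vᗮ) ε) := by
      ext u
      simp only [Set.mem_singleton_iff, Set.mem_preimage, Metric.mem_ball]
      constructor
      · rintro rfl; simpa using hε
      · intro hu
        have hmem : (u : ↥Vᗮ) - (a : ↥Vᗮ) ∈ D := D.sub_mem u.2 a.2
        have hnorm : ‖(u : ↥Vᗮ) - (a : ↥Vᗮ)‖ < ε := by
          rwa [dist_eq_norm] at hu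
        have hnormE : ‖(((u : ↥Vᗮ) - (a : ↥Vᗮ) : ↥Vᗮ) : EuclideanSpace ℝ (Fin g))‖ < ε := hnorm
        have hxH : (((u : ↥Vᗮ) - (a : ↥Vᗮ) : ↥Vᗮ) : EuclideanSpace ℝ (Fin g)) ∈ H :=
          (hDmem _).mp hmem
        have hxV : (((u : ↥Vᗮ) - (a : ↥Vᗮ) : ↥Vᗮ) : EuclideanSpace ℝ (Fin g)) ∈ V :=
          hiso _ hxH hnormE
        have hxO : (((u : ↥Vᗮ) - (a : ↥Vᗮ) : ↥Vᗮ) : EuclideanSpace ℝ (Fin g)) ∈ Vᗮ :=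
          ((u : ↥Vᗮ) - (a : ↥Vᗮ)).2
        have hx0 : (((u : ↥Vᗮ) - (a : ↥Vᗮ) : ↥Vᗮ) : EuclideanSpace ℝ (Fin g)) = 0 := by
          rw [← inner_self_eq_zero (𝕜 := ℝ)]
          exact (Submodule.mem_orthogonal V _).mp hxO _ hxV
        have : (u : ↥Vᗮ) - (a : ↥Vᗮ) = 0 := by
          exact_mod_cast hx0
        exact Subtype.ext (sub_eq_zero.mp this)
    rw [hset]
    exact continuous_subtype_val.isOpen_preimage _ Metric.isOpen_ball
  have hqD : ∀ i, q (e i) ∈ D := by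
    intro i
    show ((q (e i) : ↥Vᗮ) : EuclideanSpace ℝ (Fin g)) ∈ H
    have hrw : ((q (e i) : ↥Vᗮ) : EuclideanSpace ℝ (Fin g))
        = e i - (e i - ((q (e i) : ↥Vᗮ) : EuclideanSpace ℝ (Fin g))) := by
      rw [sub_sub_cancel]
    rw [hrw]
    exact H.sub_mem (heH i) (lineSub_le g H (hsubV (e i)))
  have hrc : ∀ (x : EuclideanSpace ℝ (Fin g)) (i : Fin g), bE.repr x i = x i := by
    intro x i
    rw [hbEdef]
    simp
  have hdecompE : ∀ x : EuclideanSpace ℝ (Fin g), x = ∑ i, x i • e i := by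
    intro x
    calc x = ∑ i, bE.repr x i • e i := (bE.sum_repr x).symm
      _ = ∑ i, x i • e i := Finset.sum_congr rfl fun i _ => by rw [hrc]
  have hqsum : ∀ x : EuclideanSpace ℝ (Fin g), (q x : ↥Vᗮ) = ∑ i, x i • (q (e i) : ↥Vᗮ) := by
    intro x
    conv_lhs => rw [hdecompE x]
    rw [map_sum]
    exact Finset.sum_congr rfl fun i _ => by rw [map_smul]
  haveI hzl : IsZLattice ℝ D := by
    constructor
    rw [eq_top_iff]
    rintro f -
    have hf : (q ((f : ↥Vᗮ) : EuclideanSpace ℝ (Fin g)) : ↥Vᗮ) = f :=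
      Submodule.orthogonalProjectionOnto_mem_subspace_eq_self f
    have hsum : f = ∑ i, ((f : ↥Vᗮ) : EuclideanSpace ℝ (Fin g)) i • (q (e i) : ↥Vᗮ) := by
      conv_lhs => rw [← hf]
      exact hqsum _
    rw [hsum]
    exact Submodule.sum_mem _ fun i _ =>
      Submodule.smul_mem _ _ (Submodule.subset_span (hqD i))
  set b := Module.Free.chooseBasis ℤ ↥D with hbdef
  set bR := b.ofZLatticeBasis ℝ D with hbRdef
  set N : Fin g → Module.Free.ChooseBasisIndex ℤ ↥D → ℤ :=
    fun i j => b.repr ⟨q (e i), hqD i⟩ j with hNdef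
  have hrepr : ∀ i, (q (e i) : ↥Vᗮ) = ∑ j, (N i j : ℝ) • bR j := by
    intro i
    have h1 : ∑ j, b.repr ⟨q (e i), hqD i⟩ j • b j = ⟨q (e i), hqD i⟩ := b.sum_repr _
    have h2 : (D.subtype) (∑ j, b.repr ⟨q (e i), hqD i⟩ j • b j) = (q (e i) : ↥Vᗮ) := by
      rw [h1]; rfl
    rw [map_sum] at h2
    rw [← h2]
    refine Finset.sum_congr rfl fun j _ => ?_
    rw [map_zsmul, Module.Basis.ofZLatticeBasis_apply, Int.cast_smul_eq_zsmul]
    rfl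
  have hqΩ : (q (WithLp.toLp 2 Ω) : ↥Vᗮ) = 0 :=
    Submodule.orthogonalProjectionOnto_apply_of_mem_orthogonal
      (Submodule.le_orthogonal_orthogonal V hΩV)
  have hzero : ∑ j, (∑ i, (N i j : ℝ) * Ω i) • bR j = 0 := by
    have h1 : (q (WithLp.toLp 2 Ω) : ↥Vᗮ) = ∑ i, ∑ j, ((N i j : ℝ) * Ω i) • bR j := by
      rw [hqsum (WithLp.toLp 2 Ω)]
      refine Finset.sum_congr rfl fun i _ => ?_
      rw [hrepr i, Finset.smul_sum]
      refine Finset.sum_congr rfl fun j _ => ?_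
      rw [smul_smul, mul_comm]
    calc ∑ j, (∑ i, (N i j : ℝ) * Ω i) • bR j
        = ∑ j, ∑ i, ((N i j : ℝ) * Ω i) • bR j :=
          Finset.sum_congr rfl fun j _ => by rw [Finset.sum_smul]
      _ = ∑ i, ∑ j, ((N i j : ℝ) * Ω i) • bR j := Finset.sum_comm
      _ = (q (WithLp.toLp 2 Ω) : ↥Vᗮ) := h1.symm
      _ = 0 := hqΩ
  have hcoef : ∀ j, (∑ i, (N i j : ℝ) * Ω i) = 0 :=
    Fintype.linearIndependent_iff.mp bR.linearIndependent _ hzero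
  have hNzero : ∀ j i, N i j = 0 := by
    intro j
    have h := hind (fun i => N i j) (hcoef j)
    intro i
    exact congrFun h i
  have hqe0 : ∀ i, (q (e i) : ↥Vᗮ) = 0 := by
    intro i
    rw [hrepr i]
    refine Finset.sum_eq_zero fun j _ => ?_
    rw [hNzero j i]
    simp
  haveI : Nontrivial ↥Vᗮ := Submodule.nontrivial_iff_ne_bot.mpr
    (fun hbot => hVne (Submodule.orthogonal_eq_bot_iff.mp hbot))
  obtain ⟨f, hf0⟩ := exists_ne (0 : ↥Vᗮ)
  apply hf0
  have hf : (q ((f : ↥Vᗮ) : EuclideanSpace ℝ (Fin g)) : ↥Vᗮ) = f :=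
    Submodule.orthogonalProjectionOnto_mem_subspace_eq_self f
  rw [← hf, hqsum]
  refine Finset.sum_eq_zero fun i _ => ?_
  rw [hqe0 i, smul_zero]
private lemma sqrt_sum_eq_norm (g : ℕ) (u : Fin g → ℝ) :
    Real.sqrt (∑ i, (u i) ^ 2) = ‖(WithLp.toLp 2 u : EuclideanSpace ℝ (Fin g))‖ := by
  rw [EuclideanSpace.norm_eq]
  congr 1
  refine Finset.sum_congr rfl fun i _ => ?_
  rw [Real.norm_eq_abs, sq_abs]

/-- The orbit `{tΩ + c : t > 0}` is dense in `ℝ^g` modulo `ℤ^g` if and only if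
`Ω₁, …, Ω_g` are rationally independent. -/
theorem orbit_dense_iff_rationally_independent
    (g : ℕ) (hg : 1 ≤ g) (Ω c : Fin g → ℝ) :
    (∀ x : Fin g → ℝ, ∀ ε : ℝ, 0 < ε → ∃ t : ℝ, 0 < t ∧ ∃ m : Fin g → ℤ,
        Real.sqrt (∑ i, (t * Ω i + c i - x i - (m i : ℝ)) ^ 2) < ε) ↔
      (∀ n : Fin g → ℤ, (∑ j, (n j : ℝ) * Ω j) = 0 → n = 0) := by
  constructor
  · -- density implies rational independence
    intro hdense n hn
    by_contra hne
    have hex : ∃ i, n i ≠ 0 := by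
      by_contra hall
      push_neg at hall
      exact hne (funext hall)
    obtain ⟨i0, hi0⟩ := hex
    have hS : (0:ℝ) < ∑ i, (n i : ℝ) ^ 2 := by
      refine Finset.sum_pos' (fun i _ => sq_nonneg _) ⟨i0, Finset.mem_univ _, ?_⟩
      have : ((n i0 : ℝ)) ≠ 0 := Int.cast_ne_zero.mpr hi0
      positivity
    set S : ℝ := ∑ i, (n i : ℝ) ^ 2 with hSdef
    have hsqS : 0 < Real.sqrt S := Real.sqrt_pos.mpr hS
    set x : Fin g → ℝ := fun i => c i + (n i : ℝ) / (2 * S) with hxdef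
    obtain ⟨t, ht, m, hlt⟩ := hdense x (1 / (2 * Real.sqrt S)) (by positivity)
    -- the inner product computation
    have hsum : ∑ i, (n i : ℝ) * (t * Ω i + c i - x i - (m i : ℝ))
        = t * (∑ i, (n i : ℝ) * Ω i) - S / (2 * S) - ∑ i, (n i : ℝ) * (m i : ℝ) := by
      rw [Finset.mul_sum, hSdef, Finset.sum_div, ← Finset.sum_sub_distrib,
        ← Finset.sum_sub_distrib]
      refine Finset.sum_congr rfl fun i _ => ?_
      simp only [hxdef]
      ring
    rw [hn, mul_zero, zero_sub] at hsum
    have hSS : S / (2 * S) = 1 / 2 := by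
      rw [div_eq_iff (by positivity : (0:ℝ) < 2*S).ne']
      ring
    rw [hSS] at hsum
    -- the sum is at distance at least 1/2 from 0
    have hhalf : (1:ℝ)/2 ≤ |∑ i, (n i : ℝ) * (t * Ω i + c i - x i - (m i : ℝ))| := by
      rw [hsum]
      have hk : ∑ i, (n i : ℝ) * (m i : ℝ) = ((∑ i, n i * m i : ℤ) : ℝ) := by
        push_cast
        rfl
      rw [hk]
      set k : ℤ := ∑ i, n i * m i with hkdef
      rcases le_or_gt 0 k with h | h
      · have : (0:ℝ) ≤ (k : ℝ) := by exact_mod_cast h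
        rw [abs_of_nonpos (by linarith)]
        linarith
      · have h1 : k ≤ -1 := by omega
        have : (k:ℝ) ≤ -1 := by exact_mod_cast h1
        rw [abs_of_nonneg (by linarith)]
        linarith
    -- Cauchy–Schwarz
    have hCS := Finset.sum_mul_sq_le_sq_mul_sq Finset.univ (fun i => (n i : ℝ))
      (fun i => t * Ω i + c i - x i - (m i : ℝ))
    have hq : (1:ℝ)/4 ≤ S * ∑ i, (t * Ω i + c i - x i - (m i : ℝ)) ^ 2 := by
      have h2 : ((1:ℝ)/2)^2 ≤ |∑ i, (n i : ℝ) * (t * Ω i + c i - x i - (m i : ℝ))| ^ 2 :=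
        pow_le_pow_left₀ (by norm_num) hhalf 2
      rw [sq_abs] at h2
      calc (1:ℝ)/4 = ((1:ℝ)/2)^2 := by norm_num
        _ ≤ (∑ i, (n i : ℝ) * (t * Ω i + c i - x i - (m i : ℝ))) ^ 2 := h2
        _ ≤ S * ∑ i, (t * Ω i + c i - x i - (m i : ℝ)) ^ 2 := hCS
    have hfinal : 1 / (2 * Real.sqrt S) ≤ Real.sqrt (∑ i, (t * Ω i + c i - x i - (m i : ℝ)) ^ 2) := by
      rw [Real.le_sqrt (by positivity) (Finset.sum_nonneg fun i _ => sq_nonneg _)]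
      have hid : (1 / (2 * Real.sqrt S)) ^ 2 = 1 / (4 * S) := by
        rw [div_pow, mul_pow, Real.sq_sqrt hS.le]
        norm_num
      rw [hid, div_le_iff₀ (by positivity)]
      nlinarith [hq]
    linarith
  · -- rational independence implies density
    intro hind x ε hε
    set y : EuclideanSpace ℝ (Fin g) := (WithLp.toLp 2 (fun i => x i - c i) : EuclideanSpace ℝ (Fin g))
      with hydef
    have hy : y ∈ closure ((orbitGroup g Ω : Set (EuclideanSpace ℝ (Fin g)))) :=
      dense_orbit g Ω hind y
    obtain ⟨v, hvG, hvdist⟩ := Metric.mem_closure_iff.mp hy (ε/2) (by positivity)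
    obtain ⟨t₀, m₀, hv⟩ := hvG
    set δ : ℝ := ε / (2 * (g + 1)) with hδdef
    have hδ : 0 < δ := by positivity
    obtain ⟨T, hT, p, hp⟩ := recurrence g Ω hδ (max 0 (-t₀))
    refine ⟨t₀ + T, by
      have := le_max_right (0:ℝ) (-t₀)
      have := le_max_left (0:ℝ) (-t₀)
      linarith, fun i => p i - m₀ i, ?_⟩
    -- rewrite the target as a norm of a sum
    set a : EuclideanSpace ℝ (Fin g) :=
      (WithLp.toLp 2 (fun i => T * Ω i - (p i : ℝ)) : EuclideanSpace ℝ (Fin g)) with hadef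
    set b : EuclideanSpace ℝ (Fin g) :=
      (WithLp.toLp 2 (fun i => -(y i - v i)) : EuclideanSpace ℝ (Fin g)) with hbdef
    have hcoord : ∀ i, (t₀ + T) * Ω i + c i - x i - ((p i - m₀ i : ℤ) : ℝ) = (a + b) i := by
      intro i
      have h1 : (a + b) i = (T * Ω i - (p i : ℝ)) + -(y i - v i) := rfl
      have h2 : y i = x i - c i := rfl
      rw [h1, h2, hv i]
      push_cast
      ring
    have hrw : Real.sqrt (∑ i, ((t₀ + T) * Ω i + c i - x i - ((p i - m₀ i : ℤ) : ℝ)) ^ 2)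
        = ‖a + b‖ := by
      rw [show (∑ i, ((t₀ + T) * Ω i + c i - x i - ((p i - m₀ i : ℤ) : ℝ)) ^ 2)
          = ∑ i, ((a + b) i) ^ 2 from Finset.sum_congr rfl fun i _ => by rw [hcoord i]]
      exact sqrt_sum_eq_norm g (fun i => (a + b) i)
    rw [hrw]
    have hna : ‖a‖ ≤ ε / 2 := by
      have h1 : Real.sqrt (∑ i, (T * Ω i - (p i : ℝ)) ^ 2) = ‖a‖ := sqrt_sum_eq_norm g _
      rw [← h1]
      have h2 : (∑ i, (T * Ω i - (p i : ℝ)) ^ 2) ≤ g * δ ^ 2 := by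
        have := Finset.sum_le_card_nsmul Finset.univ (fun i => (T * Ω i - (p i : ℝ)) ^ 2) (δ ^ 2)
          (fun i _ => by
            have habs := (hp i).le
            calc (T * Ω i - (p i : ℝ)) ^ 2 = |T * Ω i - (p i : ℝ)| ^ 2 := (sq_abs _).symm
              _ ≤ δ ^ 2 := pow_le_pow_left₀ (abs_nonneg _) habs 2)
        simpa [nsmul_eq_mul] using this
      calc Real.sqrt (∑ i, (T * Ω i - (p i : ℝ)) ^ 2) ≤ Real.sqrt ((g:ℝ) * δ ^ 2) :=
            Real.sqrt_le_sqrt h2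
        _ ≤ Real.sqrt (((g:ℝ) + 1) ^ 2 * δ ^ 2) := by
            apply Real.sqrt_le_sqrt
            have : (g:ℝ) ≤ ((g:ℝ)+1)^2 := by nlinarith [Nat.cast_nonneg (α := ℝ) g]
            nlinarith [sq_nonneg δ]
        _ = ((g:ℝ) + 1) * δ := by
            rw [← mul_pow, Real.sqrt_sq (by positivity)]
        _ = ε / 2 := by
            rw [hδdef]
            field_simp
    have hnb : ‖b‖ < ε / 2 := by
      have : ‖b‖ = dist y v := by
        rw [dist_eq_norm, hbdef]
        rw [show (WithLp.toLp 2 (fun i => -(y i - v i)) : EuclideanSpace ℝ (Fin g)) = -(y - v) from rfl]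
        rw [norm_neg]
      rw [this]
      exact hvdist
    calc ‖a + b‖ ≤ ‖a‖ + ‖b‖ := norm_add_le a b
      _ < ε / 2 + ε / 2 := by
        apply add_lt_add_of_le_of_lt hna hnb
      _ = ε := by ring
end

section
/- Let g ≥ 1, let Ω ∈ ℝ^g and c ∈ ℝ^g be arbitrary, and let H : ℝ^g → ℝ be continuous and ℤ^g-periodic, i.e., H(x + m) = H(x) for all x ∈ ℝ^g and m ∈ ℤ^g. Then the mean value lim_{T→+∞} (1/T) ∫_0^T H(tΩ + c) dt exists (i.e., the limit exists in ℝ). -/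
open BigOperators Filter MeasureTheory intervalIntegral

private lemma mean_cos_exists (a b : ℝ) :
    ∃ L : ℝ, Tendsto (fun T : ℝ => (1 / T) * ∫ t in (0:ℝ)..T, Real.cos (a * t + b))
      atTop (nhds L) := by
  rcases eq_or_ne a 0 with ha | ha
  · refine ⟨Real.cos b, ?_⟩
    apply Tendsto.congr' ?_ (tendsto_const_nhds (α := ℝ) (f := atTop))
    filter_upwards [eventually_ge_atTop (1:ℝ)] with T hT
    have hT0 : T ≠ 0 := by linarith
    subst ha
    simp only [zero_mul, zero_add, intervalIntegral.integral_const, smul_eq_mul, sub_zero]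
    field_simp
  · refine ⟨0, ?_⟩
    have key : ∀ T : ℝ, (∫ t in (0:ℝ)..T, Real.cos (a * t + b))
        = a⁻¹ * (Real.sin (a * T + b) - Real.sin (a * 0 + b)) := by
      intro T
      rw [intervalIntegral.integral_comp_mul_add Real.cos ha b, integral_cos, smul_eq_mul]
    apply squeeze_zero_norm' (a := fun T : ℝ => T⁻¹ * (2 * |a|⁻¹))
    · filter_upwards [eventually_ge_atTop (1:ℝ)] with T hT
      have hT0 : 0 < T := by linarith
      rw [key, Real.norm_eq_abs, abs_mul, abs_mul]
      have h1 : |1 / T| = T⁻¹ := by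
        rw [abs_of_pos (by positivity), one_div]
      have h2 : |Real.sin (a * T + b) - Real.sin (a * 0 + b)| ≤ 2 := by
        have := Real.abs_sin_le_one (a * T + b)
        have := Real.abs_sin_le_one (a * 0 + b)
        calc |Real.sin (a * T + b) - Real.sin (a * 0 + b)|
            ≤ |Real.sin (a * T + b)| + |Real.sin (a * 0 + b)| := abs_sub _ _
          _ ≤ 2 := by linarith
      rw [h1]
      have : |a⁻¹| * |Real.sin (a * T + b) - Real.sin (a * 0 + b)| ≤ 2 * |a|⁻¹ := by
        rw [abs_inv]
        nlinarith [abs_nonneg a, abs_pos.mpr ha, inv_nonneg.mpr (abs_nonneg a)]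
      have hTi : (0:ℝ) ≤ T⁻¹ := by positivity
      nlinarith [mul_le_mul_of_nonneg_left this hTi]
    · have : Tendsto (fun T : ℝ => T⁻¹) atTop (nhds 0) := tendsto_inv_atTop_zero
      simpa using this.mul_const (2 * |a|⁻¹)

private def trigSet : Set (ℝ → ℝ) := {f : ℝ → ℝ | ∃ a b : ℝ, f = fun t => Real.cos (a * t + b)}

private def Vspan : Submodule ℝ (ℝ → ℝ) := Submodule.span ℝ trigSet

private lemma mean_exists_of_mem_Vspan {f : ℝ → ℝ} (hf : f ∈ Vspan) :
    Continuous f ∧ ∃ L : ℝ, Tendsto (fun T : ℝ => (1 / T) * ∫ t in (0:ℝ)..T, f t)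
      atTop (nhds L) := by
  induction hf using Submodule.span_induction with
  | mem u hu =>
    obtain ⟨a, b, rfl⟩ := hu
    exact ⟨(Real.continuous_cos.comp (by continuity)), mean_cos_exists a b⟩
  | zero =>
    refine ⟨continuous_const, 0, ?_⟩
    have h : (fun T : ℝ => (1 / T) * ∫ t in (0:ℝ)..T, (0 : ℝ → ℝ) t) = fun _ => (0:ℝ) := by
      funext T; simp
    rw [h]; exact tendsto_const_nhds
  | add u v hu hv ihu ihv =>
    obtain ⟨hcu, Lu, hLu⟩ := ihu
    obtain ⟨hcv, Lv, hLv⟩ := ihv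
    refine ⟨hcu.add hcv, Lu + Lv, ?_⟩
    have h : (fun T : ℝ => (1 / T) * ∫ t in (0:ℝ)..T, (u + v) t)
        = fun T : ℝ => ((1 / T) * ∫ t in (0:ℝ)..T, u t) + ((1 / T) * ∫ t in (0:ℝ)..T, v t) := by
      funext T
      simp only [Pi.add_apply]
      rw [intervalIntegral.integral_add (hcu.intervalIntegrable _ _) (hcv.intervalIntegrable _ _),
        mul_add]
    rw [h]; exact hLu.add hLv
  | smul r u hu ihu =>
    obtain ⟨hcu, Lu, hLu⟩ := ihu
    refine ⟨hcu.const_smul r, r * Lu, ?_⟩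
    have h : (fun T : ℝ => (1 / T) * ∫ t in (0:ℝ)..T, (r • u) t)
        = fun T : ℝ => r * ((1 / T) * ∫ t in (0:ℝ)..T, u t) := by
      funext T
      simp only [Pi.smul_apply, smul_eq_mul]
      rw [intervalIntegral.integral_const_mul]
      ring
    rw [h]; exact hLu.const_mul r

private lemma Vspan_gen_mul (a b : ℝ) {h : ℝ → ℝ} (hh : h ∈ Vspan) :
    (fun t => Real.cos (a * t + b)) * h ∈ Vspan := by
  induction hh using Submodule.span_induction with
  | mem v hv =>
    obtain ⟨a', b', rfl⟩ := hv
    have hfe : (fun t => Real.cos (a * t + b)) * (fun t => Real.cos (a' * t + b'))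
        = (1/2 : ℝ) • (fun t => Real.cos ((a - a') * t + (b - b')))
          + (1/2 : ℝ) • (fun t => Real.cos ((a + a') * t + (b + b'))) := by
      funext t
      have key : ∀ x y : ℝ, Real.cos x * Real.cos y
          = 1/2 * Real.cos (x - y) + 1/2 * Real.cos (x + y) := by
        intro x y; rw [Real.cos_sub, Real.cos_add]; ring
      have h1 : (a - a') * t + (b - b') = (a * t + b) - (a' * t + b') := by ring
      have h2 : (a + a') * t + (b + b') = (a * t + b) + (a' * t + b') := by ring
      simp only [Pi.add_apply, Pi.smul_apply, Pi.mul_apply, smul_eq_mul]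
      rw [h1, h2, key]
    rw [hfe]
    exact Submodule.add_mem _
      (Submodule.smul_mem _ _ (Submodule.subset_span ⟨_, _, rfl⟩))
      (Submodule.smul_mem _ _ (Submodule.subset_span ⟨_, _, rfl⟩))
  | zero => rw [mul_zero]; exact Submodule.zero_mem _
  | add u v hu hv ihu ihv => rw [mul_add]; exact Submodule.add_mem _ ihu ihv
  | smul r u hu ihu => rw [mul_smul_comm]; exact Submodule.smul_mem _ _ ihu

private lemma Vspan_mul {f h : ℝ → ℝ} (hf : f ∈ Vspan) (hh : h ∈ Vspan) : f * h ∈ Vspan := by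
  induction hf using Submodule.span_induction with
  | mem u hu => obtain ⟨a, b, rfl⟩ := hu; exact Vspan_gen_mul a b hh
  | zero => rw [zero_mul]; exact Submodule.zero_mem _
  | add u v hu hv ihu ihv => rw [add_mul]; exact Submodule.add_mem _ ihu ihv
  | smul r u hu ihu => rw [smul_mul_assoc]; exact Submodule.smul_mem _ _ ihu

private lemma Vspan_one : (1 : ℝ → ℝ) ∈ Vspan := by
  apply Submodule.subset_span
  refine ⟨0, 0, ?_⟩
  funext t; simp

private lemma Vspan_const (r : ℝ) : (fun _ : ℝ => r) ∈ Vspan := by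
  have : (fun _ : ℝ => r) = r • (1 : ℝ → ℝ) := by funext t; simp
  rw [this]; exact Submodule.smul_mem _ _ Vspan_one

/-- For any `Ω, c ∈ ℝ^g` and any continuous `ℤ^g`-periodic function `H : ℝ^g → ℝ`,
the mean value `lim_{T→+∞} (1/T)∫_0^T H(tΩ + c) dt` exists. -/
theorem mean_value_exists
    (g : ℕ) (hg : 1 ≤ g) (Ω c : Fin g → ℝ)
    (H : (Fin g → ℝ) → ℝ) (hH : Continuous H)
    (hper : ∀ (x : Fin g → ℝ) (m : Fin g → ℤ), H (x + fun i => (m i : ℝ)) = H x) :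
    ∃ L : ℝ, Filter.Tendsto (fun T : ℝ => (1 / T) * ∫ t in (0:ℝ)..T, H (t • Ω + c))
      Filter.atTop (nhds L) := by
  classical
  haveI : Fact ((0:ℝ) < 1) := ⟨one_pos⟩
  set f : ℝ → ℝ := fun t => H (t • Ω + c) with hfdef
  have hline : Continuous fun t : ℝ => t • Ω + c := by continuity
  have hcf : Continuous f := hH.comp hline
  -- the torus and the quotient map
  set p : (Fin g → ℝ) → (Fin g → AddCircle (1:ℝ)) :=
    fun x i => (x i : AddCircle (1:ℝ)) with hpdef
  have hp : IsOpenQuotientMap p :=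
    IsOpenQuotientMap.piMap fun _ => QuotientAddGroup.isOpenQuotientMap_mk
  have hcoe : ∀ z : AddCircle (1:ℝ),
      (((AddCircle.equivIco 1 0 z : Set.Ico (0:ℝ) (0+1)) : ℝ) : AddCircle (1:ℝ)) = z :=
    fun z => (AddCircle.equivIco 1 0).symm_apply_apply z
  -- descend H to the torus
  set Hbar : (Fin g → AddCircle (1:ℝ)) → ℝ :=
    fun z => H fun i => ((AddCircle.equivIco 1 0 (z i) : Set.Ico (0:ℝ) (0+1)) : ℝ) with hHbar
  have hfac : ∀ x : Fin g → ℝ, Hbar (p x) = H x := by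
    intro x
    set y : Fin g → ℝ :=
      fun i => ((AddCircle.equivIco 1 0 ((x i : AddCircle (1:ℝ))) : Set.Ico (0:ℝ) (0+1)) : ℝ)
      with hy
    have hmem : ∀ i, ∃ k : ℤ, k • (1:ℝ) = y i - x i := by
      intro i
      have h1 : ((y i : ℝ) : AddCircle (1:ℝ)) = ((x i : ℝ) : AddCircle (1:ℝ)) := hcoe _
      have h2 : y i - x i ∈ AddSubgroup.zmultiples (1:ℝ) := by
        rwa [QuotientAddGroup.eq_iff_sub_mem] at h1
      exact AddSubgroup.mem_zmultiples_iff.mp h2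
    choose m hm using hmem
    have hxy : y = x + fun i => ((m i : ℤ) : ℝ) := by
      funext i
      have h3 := hm i
      rw [zsmul_eq_mul, mul_one] at h3
      simp only [Pi.add_apply]
      linarith
    calc Hbar (p x) = H y := rfl
      _ = H x := by rw [hxy]; exact hper x m
  have hHbarc : Continuous Hbar := by
    have h1 : Hbar ∘ p = H := funext hfac
    exact hp.continuous_comp_iff.mp (by rw [h1]; exact hH)
  -- generators of a separating subalgebra on the torus
  let cosF : Fin g → C(Fin g → AddCircle (1:ℝ), ℝ) := fun i =>
    ⟨fun z => ((AddCircle.toCircle (z i) : ℂ)).re,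
      Complex.continuous_re.comp (continuous_subtype_val.comp
        (AddCircle.continuous_toCircle.comp (continuous_apply i)))⟩
  let sinF : Fin g → C(Fin g → AddCircle (1:ℝ), ℝ) := fun i =>
    ⟨fun z => ((AddCircle.toCircle (z i) : ℂ)).im,
      Complex.continuous_im.comp (continuous_subtype_val.comp
        (AddCircle.continuous_toCircle.comp (continuous_apply i)))⟩
  have hsep : (Algebra.adjoin ℝ (Set.range cosF ∪ Set.range sinF)).SeparatesPoints := by
    intro z w hzw
    obtain ⟨i, hi⟩ := Function.ne_iff.mp hzw
    have h2 : (AddCircle.toCircle (z i) : ℂ) ≠ (AddCircle.toCircle (w i) : ℂ) := by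
      intro h
      exact hi (AddCircle.injective_toCircle one_ne_zero (Circle.coe_injective h))
    by_cases hre : ((AddCircle.toCircle (z i) : ℂ)).re = ((AddCircle.toCircle (w i) : ℂ)).re
    · have him : ((AddCircle.toCircle (z i) : ℂ)).im ≠ ((AddCircle.toCircle (w i) : ℂ)).im := by
        intro h; exact h2 (Complex.ext hre h)
      exact ⟨_, ⟨sinF i, Algebra.subset_adjoin (Or.inr ⟨i, rfl⟩), rfl⟩, him⟩
    · exact ⟨_, ⟨cosF i, Algebra.subset_adjoin (Or.inl ⟨i, rfl⟩), rfl⟩, hre⟩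
  -- the path on the torus
  set γ : ℝ → (Fin g → AddCircle (1:ℝ)) := fun t => p (t • Ω + c) with hγdef
  have hγi : ∀ (t : ℝ) (i : Fin g), γ t i = ((t * Ω i + c i : ℝ) : AddCircle (1:ℝ)) :=
    fun t i => rfl
  -- composition of adjoin elements with the path lands in Vspan
  have hcomp : ∀ h : C(Fin g → AddCircle (1:ℝ), ℝ),
      h ∈ Algebra.adjoin ℝ (Set.range cosF ∪ Set.range sinF) →
      (fun t : ℝ => h (γ t)) ∈ Vspan := by
    intro h hh
    induction hh using Algebra.adjoin_induction with
    | mem u hu =>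
      rcases hu with hu | hu
      · obtain ⟨i, rfl⟩ := hu
        apply Submodule.subset_span
        refine ⟨2 * Real.pi * Ω i, 2 * Real.pi * c i, ?_⟩
        funext t
        show ((AddCircle.toCircle (γ t i) : ℂ)).re = _
        rw [hγi t i, AddCircle.toCircle_apply_mk, Circle.coe_exp,
          Complex.exp_ofReal_mul_I_re]
        congr 1; field_simp
      · obtain ⟨i, rfl⟩ := hu
        apply Submodule.subset_span
        refine ⟨2 * Real.pi * Ω i, 2 * Real.pi * c i - Real.pi / 2, ?_⟩
        funext t
        have hsin : ∀ x : ℝ, Real.sin x = Real.cos (x - Real.pi / 2) := by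
          intro x; rw [Real.cos_sub]; simp
        show ((AddCircle.toCircle (γ t i) : ℂ)).im = _
        rw [hγi t i, AddCircle.toCircle_apply_mk, Circle.coe_exp,
          Complex.exp_ofReal_mul_I_im, hsin]
        congr 1; field_simp; ring
    | algebraMap r =>
      have h1 : (fun t : ℝ => (algebraMap ℝ C(Fin g → AddCircle (1:ℝ), ℝ) r) (γ t))
          = fun _ : ℝ => r := by
        funext t; simp
      rw [h1]; exact Vspan_const r
    | add x y hx hy ihx ihy =>
      have h1 : (fun t : ℝ => (x + y) (γ t))
          = (fun t : ℝ => x (γ t)) + (fun t : ℝ => y (γ t)) := rfl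
      rw [h1]; exact Submodule.add_mem _ ihx ihy
    | mul x y hx hy ihx ihy =>
      have h1 : (fun t : ℝ => (x * y) (γ t))
          = (fun t : ℝ => x (γ t)) * (fun t : ℝ => y (γ t)) := rfl
      rw [h1]; exact Vspan_mul ihx ihy
  -- approximation of f by functions with a mean value
  have happrox : ∀ ε : ℝ, 0 < ε → ∃ u : ℝ → ℝ, Continuous u ∧
      (∃ L : ℝ, Tendsto (fun T : ℝ => (1 / T) * ∫ t in (0:ℝ)..T, u t) atTop (nhds L)) ∧
      ∀ t : ℝ, |f t - u t| ≤ ε := by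
    intro ε hε
    obtain ⟨u0, hu0⟩ := ContinuousMap.exists_mem_subalgebra_near_continuous_of_separatesPoints
      (Algebra.adjoin ℝ (Set.range cosF ∪ Set.range sinF)) hsep Hbar hHbarc ε hε
    have hmem := hcomp (u0 : C(Fin g → AddCircle (1:ℝ), ℝ)) u0.2
    obtain ⟨hucont, hmean⟩ := mean_exists_of_mem_Vspan hmem
    refine ⟨fun t => (u0 : C(Fin g → AddCircle (1:ℝ), ℝ)) (γ t), hucont, hmean, ?_⟩
    intro t
    have h1 : f t = Hbar (γ t) := (hfac (t • Ω + c)).symm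
    rw [h1, abs_sub_comm]
    exact le_of_lt (hu0 (γ t))
  -- conclude by a Cauchy criterion
  haveI : (atTop : Filter ℝ).NeBot := atTop_neBot
  set Af : ℝ → ℝ := fun T => (1 / T) * ∫ t in (0:ℝ)..T, f t with hAfdef
  suffices hC : Cauchy (Filter.map Af atTop) by
    obtain ⟨L, hL⟩ := cauchy_map_iff_exists_tendsto.mp hC
    exact ⟨L, hL⟩
  rw [Metric.cauchy_iff]
  refine ⟨Filter.map_neBot, fun ε hε => ?_⟩
  obtain ⟨u, hucont, ⟨L, hL⟩, hclose⟩ := happrox (ε / 8) (by positivity)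
  set Au : ℝ → ℝ := fun T => (1 / T) * ∫ t in (0:ℝ)..T, u t with hAudef
  obtain ⟨N, hN⟩ := Metric.tendsto_atTop.mp hL (ε / 8) (by positivity)
  set N' : ℝ := max N 1 with hN'def
  have key : ∀ T, N' ≤ T → dist (Af T) (Au T) ≤ ε / 4 := by
    intro T hT
    have hT1 : (1:ℝ) ≤ T := le_trans (le_max_right _ _) hT
    have hT0 : 0 < T := by linarith
    have hint : Af T - Au T = (1 / T) * ∫ t in (0:ℝ)..T, (f t - u t) := by
      rw [intervalIntegral.integral_sub (hcf.intervalIntegrable _ _)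
        (hucont.intervalIntegrable _ _), mul_sub]
    rw [Real.dist_eq, hint, abs_mul]
    have hb : |∫ t in (0:ℝ)..T, (f t - u t)| ≤ (ε / 8) * |T - 0| := by
      rw [← Real.norm_eq_abs]
      apply intervalIntegral.norm_integral_le_of_norm_le_const
      intro x _
      exact hclose x
    have h1 : |1 / T| = 1 / T := abs_of_pos (by positivity)
    have h2 : |T - (0:ℝ)| = T := by rw [sub_zero, abs_of_pos hT0]
    rw [h1]
    rw [h2] at hb
    calc (1 / T) * |∫ t in (0:ℝ)..T, (f t - u t)|
        ≤ (1 / T) * ((ε / 8) * T) := by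
          apply mul_le_mul_of_nonneg_left hb (by positivity)
      _ = ε / 8 := by field_simp
      _ ≤ ε / 4 := by linarith
  refine ⟨Af '' Set.Ici N', Filter.image_mem_map (Ici_mem_atTop N'), ?_⟩
  rintro x ⟨T, hT, rfl⟩ y ⟨T', hT', rfl⟩
  have h1 := key T hT
  have h2 := key T' hT'
  have h3 := hN T (le_trans (le_max_left _ _) hT)
  have h4 := hN T' (le_trans (le_max_left _ _) hT')
  have t1 : dist (Af T) (Af T')
      ≤ dist (Af T) (Au T) + dist (Au T) (Au T') + dist (Au T') (Af T') :=
    dist_triangle4 _ _ _ _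
  have t2 : dist (Au T) (Au T') ≤ dist (Au T) L + dist L (Au T') := dist_triangle _ _ _
  have t3 : dist L (Au T') = dist (Au T') L := dist_comm _ _
  have t4 : dist (Au T') (Af T') = dist (Af T') (Au T') := dist_comm _ _
  rw [t3] at t2
  rw [t4] at t1
  linarith
end
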